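/- arXiv:2107.03114 — 6 statements merged into one kernel-verified Lean document; each statement's English description precedes it below -/
import Mathlib

section
/- Let n ≥ 2, assume (n, p) ≠ (2, 2) and (n, |F|) ≠ (2, 3). Let R be an Artinian commutative local ring with maximal ideal m_R and residue field F, and let H be a subgroup of SL_n(R) whose image under the entrywise reduction SL_n(R) → SL_n(R/m_R²) is all of SL_n(R/m_R²). Then H = SL_n(R). -/
open Matrix IsLocalRing
open scoped commutatorElement

namespace Statement4Aux

variable {n : ℕ} {R : Type*} [CommRing R]

/-- All entries of `M` lie in the ideal `I`. -/
def MI (M : Matrix (Fin n) (Fin n) R) (I : Ideal R) : Prop := ∀ a b, M a b ∈ I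

namespace MI

variable {M N : Matrix (Fin n) (Fin n) R} {I J : Ideal R}

lemma zero : MI (0 : Matrix (Fin n) (Fin n) R) I := fun _ _ => I.zero_mem

lemma add (hM : MI M I) (hN : MI N I) : MI (M + N) I := fun a b => by
  simpa using I.add_mem (hM a b) (hN a b)

lemma neg (hM : MI M I) : MI (-M) I := fun a b => by
  simpa using Submodule.neg_mem _ (hM a b)

lemma sub (hM : MI M I) (hN : MI N I) : MI (M - N) I := fun a b => by
  simpa using Submodule.sub_mem _ (hM a b) (hN a b)

lemma mono (h : I ≤ J) (hM : MI M I) : MI M J := fun a b => h (hM a b)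

lemma mul (hM : MI M I) (hN : MI N J) : MI (M * N) (I * J) := fun a b => by
  rw [Matrix.mul_apply]
  exact Submodule.sum_mem _ fun k _ => Ideal.mul_mem_mul (hM a k) (hN k b)

lemma mul_left (hN : MI N I) (M : Matrix (Fin n) (Fin n) R) : MI (M * N) I := fun a b => by
  rw [Matrix.mul_apply]
  exact Submodule.sum_mem _ fun k _ => I.mul_mem_left _ (hN k b)

lemma mul_right (hM : MI M I) (N : Matrix (Fin n) (Fin n) R) : MI (M * N) I := fun a b => by
  rw [Matrix.mul_apply]
  exact Submodule.sum_mem _ fun k _ => I.mul_mem_right _ (hM a k)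

end MI

lemma MI_stdBasisMatrix {I : Ideal R} {x : R} (hx : x ∈ I) (a b : Fin n) :
    MI (Matrix.single a b x) I := fun c d => by
  simp only [Matrix.single, of_apply]
  split_ifs
  · exact hx
  · exact I.zero_mem

lemma map_eq_of_MI {I : Ideal R} {M N : Matrix (Fin n) (Fin n) R}
    (h : MI (M - N) I) : M.map (Ideal.Quotient.mk I) = N.map (Ideal.Quotient.mk I) := by
  ext a b
  simp only [Matrix.map_apply]
  rw [Ideal.Quotient.mk_eq_mk_iff_sub_mem]
  simpa using h a b

lemma det_one_add_single {S : Type*} [CommRing S] [Fintype (Fin n)] (z : Fin n) (c : S) :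
    ((1 : Matrix (Fin n) (Fin n) S) + Matrix.single z z c).det = 1 + c := by
  have e : (1 : Matrix (Fin n) (Fin n) S) + Matrix.single z z c
      = Matrix.diagonal (fun t => if t = z then 1 + c else 1) := by
    ext t s
    by_cases hts : t = s
    · subst hts
      by_cases htz : t = z
      · subst htz; simp [Matrix.single]
      · simp [Matrix.single, htz, Ne.symm htz]
    · simp only [Matrix.add_apply, Matrix.one_apply_ne hts, Matrix.diagonal_apply_ne _ hts,
        Matrix.single, of_apply, zero_add]
      rw [if_neg]
      rintro ⟨h1, h2⟩
      exact hts (h1.symm.trans h2)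
  rw [e, Matrix.det_diagonal]
  rw [Finset.prod_ite_eq' Finset.univ z (fun _ => 1 + c)]
  simp


section SL

lemma val_mul (g₁ g₂ : SpecialLinearGroup (Fin n) R) : (g₁ * g₂).val = g₁.val * g₂.val := rfl

lemma val_one : ((1 : SpecialLinearGroup (Fin n) R)).val = 1 := rfl

lemma inv_val_mul (g : SpecialLinearGroup (Fin n) R) : (g⁻¹).val * g.val = 1 := by
  have h := congrArg Subtype.val (inv_mul_cancel g)
  rwa [val_mul, val_one] at h

lemma val_mul_inv (g : SpecialLinearGroup (Fin n) R) : g.val * (g⁻¹).val = 1 := by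
  have h := congrArg Subtype.val (mul_inv_cancel g)
  rwa [val_mul, val_one] at h

lemma inv_one_approx {I : Ideal R} {k : SpecialLinearGroup (Fin n) R}
    (hk : MI (k.val - 1) I) : MI ((k⁻¹).val - 1) I := by
  have hX : (k⁻¹).val * k.val = 1 := inv_val_mul k
  have e : (k⁻¹).val - 1 = -((k⁻¹).val * (k.val - 1)) := by
    rw [mul_sub, hX, mul_one]; abel
  rw [e]
  exact (hk.mul_left _).neg

lemma inv_approx {I J : Ideal R} {h : SpecialLinearGroup (Fin n) R}
    {B : Matrix (Fin n) (Fin n) R} (hB : MI B I) (hD : MI (h.val - (1 + B)) J)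
    (hIJ : I * I ≤ J) (hJI : J ≤ I) : MI ((h⁻¹).val - (1 - B)) J := by
  set X := (h⁻¹).val with hXdef
  have hX : X * h.val = 1 := inv_val_mul h
  have hhv1 : MI (h.val - 1) I := by
    have e : h.val - 1 = (h.val - (1 + B)) + B := by abel
    rw [e]; exact (hD.mono hJI).add hB
  have hX1 : MI (X - 1) I := by
    have e : X - 1 = -(X * (h.val - 1)) := by rw [mul_sub, hX, mul_one]; abel
    rw [e]; exact (hhv1.mul_left X).neg
  have e2 : (X - 1) * (h.val - 1) = 1 - X - h.val + 1 := by
    have e3 : (X - 1) * (h.val - 1) = X * h.val - X - h.val + 1 := by noncomm_ring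
    rw [e3, hX]
  have key : X - (1 - B) = -((X - 1) * (h.val - 1)) - (h.val - (1 + B)) := by
    rw [e2]; abel
  rw [key]
  exact (((hX1.mul hhv1).mono hIJ).neg).sub hD


/-- The set of near-identity residues reachable by `H`. -/
def WW (H : Subgroup (SpecialLinearGroup (Fin n) R)) (I J : Ideal R)
    (B₀ : Matrix (Fin n) (Fin n) R) : Prop :=
  MI B₀ I ∧ ∃ h ∈ H, MI (h.val - (1 + B₀)) J

namespace WW

variable {H : Subgroup (SpecialLinearGroup (Fin n) R)} {I J : Ideal R}
variable {B₁ B₂ B : Matrix (Fin n) (Fin n) R}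

lemma zero : WW H I J 0 :=
  ⟨MI.zero, 1, H.one_mem, by rw [val_one, add_zero, sub_self]; exact MI.zero⟩

lemma add (hIJ : I * I ≤ J) (h1 : WW H I J B₁) (h2 : WW H I J B₂) : WW H I J (B₁ + B₂) := by
  obtain ⟨hB₁, h₁, h₁H, e₁⟩ := h1
  obtain ⟨hB₂, h₂, h₂H, e₂⟩ := h2
  refine ⟨hB₁.add hB₂, h₁ * h₂, H.mul_mem h₁H h₂H, ?_⟩
  have e : (h₁ * h₂).val - (1 + (B₁ + B₂)) =
      B₁ * B₂ + (1 + B₁) * (h₂.val - (1 + B₂)) + (h₁.val - (1 + B₁)) * (1 + B₂)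
        + (h₁.val - (1 + B₁)) * (h₂.val - (1 + B₂)) := by
    rw [val_mul]; noncomm_ring
  rw [e]
  exact ((((hB₁.mul hB₂).mono hIJ).add (e₂.mul_left _)).add (e₁.mul_right _)).add
    (e₂.mul_left _)

lemma neg (hIJ : I * I ≤ J) (hJI : J ≤ I) (h1 : WW H I J B) : WW H I J (-B) := by
  obtain ⟨hB, h, hH, e⟩ := h1
  refine ⟨hB.neg, h⁻¹, H.inv_mem hH, ?_⟩
  have := inv_approx hB e hIJ hJI
  rwa [sub_eq_add_neg (1 : Matrix (Fin n) (Fin n) R) B] at this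

lemma sum (hIJ : I * I ≤ J) {ι : Type*} (s : Finset ι) (f : ι → Matrix (Fin n) (Fin n) R)
    (hf : ∀ x ∈ s, WW H I J (f x)) : WW H I J (∑ x ∈ s, f x) :=
  Finset.sum_induction f _ (fun _ _ => WW.add hIJ) WW.zero hf

end WW

end SL


lemma step {R : Type*} [CommRing R] [IsLocalRing R] {n : ℕ} (hn : 2 ≤ n)
    (h3 : (∀ x ∈ maximalIdeal R, IsUnit ((2 : R) + x)) ∨ 3 ≤ n)
    (H : Subgroup (SpecialLinearGroup (Fin n) R)) (i : ℕ)
    (Pj : ∀ g : SpecialLinearGroup (Fin n) R, ∃ h ∈ H,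
      MI ((h⁻¹ * g).val - 1) (maximalIdeal R ^ (i + 2))) :
    ∀ g : SpecialLinearGroup (Fin n) R, ∃ h ∈ H,
      MI ((h⁻¹ * g).val - 1) (maximalIdeal R ^ (i + 3)) := by
  set m := maximalIdeal R with hmdef
  -- ideal arithmetic facts
  have hm12 : m * m ^ (i + 1) = m ^ (i + 2) := (pow_succ' m (i + 1)).symm
  have hm21 : m ^ (i + 1) * m = m ^ (i + 2) := (pow_succ m (i + 1)).symm
  have hm13 : m * m ^ (i + 2) = m ^ (i + 3) := (pow_succ' m (i + 2)).symm
  have hm31 : m ^ (i + 2) * m = m ^ (i + 3) := (pow_succ m (i + 2)).symm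
  have hII : m ^ (i + 2) * m ^ (i + 2) ≤ m ^ (i + 3) := by
    rw [← pow_add]; exact Ideal.pow_le_pow_right (by omega)
  have hII1 : m ^ (i + 2) * m ^ (i + 1) ≤ m ^ (i + 3) := by
    rw [← pow_add]; exact Ideal.pow_le_pow_right (by omega)
  have hI1I : m ^ (i + 1) * m ^ (i + 2) ≤ m ^ (i + 3) := by
    rw [← pow_add]; exact Ideal.pow_le_pow_right (by omega)
  have hI1m : m ^ (i + 1) ≤ m := Ideal.pow_le_self (by omega)
  have hIm : m ^ (i + 2) ≤ m := Ideal.pow_le_self (by omega)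
  have hJI : m ^ (i + 3) ≤ m ^ (i + 2) := Ideal.pow_le_pow_right (by omega)
  have hmm : m * m ≤ m := Ideal.mul_le_left
  -- approximating arbitrary special linear matrices by elements of H
  have approx : ∀ g₀ : SpecialLinearGroup (Fin n) R, ∃ h ∈ H,
      MI (h.val - g₀.val) (m ^ (i + 2)) := by
    intro g₀
    obtain ⟨h, hH, hk⟩ := Pj g₀
    refine ⟨h, hH, ?_⟩
    have hkinv : MI (((h⁻¹ * g₀)⁻¹).val - 1) (m ^ (i + 2)) := inv_one_approx hk
    have e : h.val - g₀.val = g₀.val * (((h⁻¹ * g₀)⁻¹).val - 1) := by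
      have e1 : h = g₀ * (h⁻¹ * g₀)⁻¹ := by group
      rw [mul_sub, mul_one, ← val_mul, ← e1]
    rw [e]
    exact hkinv.mul_left _
  -- the commutator construction
  have com : ∀ A B : Matrix (Fin n) (Fin n) R, MI A m → MI B (m ^ (i + 1)) →
      (1 + A).det = 1 → (1 + B).det = 1 →
      ∃ h ∈ H, MI (h.val - (1 + (A * B - B * A))) (m ^ (i + 3)) := by
    intro A B hA hB dA dB
    obtain ⟨h, hH, hU⟩ := approx ⟨1 + A, dA⟩
    obtain ⟨h', h'H, hV⟩ := approx ⟨1 + B, dB⟩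
    have hU' : MI (h.val - (1 + A)) (m ^ (i + 2)) := hU
    have hV' : MI (h'.val - (1 + B)) (m ^ (i + 2)) := hV
    have hU1 : MI (h.val - 1) m := by
      have e : h.val - 1 = (h.val - (1 + A)) + A := by abel
      rw [e]; exact (hU'.mono hIm).add hA
    have hV1 : MI (h'.val - 1) m := by
      have e : h'.val - 1 = (h'.val - (1 + B)) + B := by abel
      rw [e]; exact (hV'.mono hIm).add (hB.mono hI1m)
    have hVU1 : MI (h'.val * h.val - 1) m := by
      have e : h'.val * h.val - 1
          = (h'.val - 1) * (h.val - 1) + (h'.val - 1) + (h.val - 1) := by noncomm_ring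
      rw [e]; exact (((hV1.mul hU1).mono hmm).add hV1).add hU1
    have hCI : MI (A * B - B * A) (m ^ (i + 2)) :=
      ((hA.mul hB).mono hm12.le).sub ((hB.mul hA).mono hm21.le)
    have hF : MI (h.val * h'.val - (1 + (A * B - B * A)) * (h'.val * h.val)) (m ^ (i + 3)) := by
      have e : h.val * h'.val - (1 + (A * B - B * A)) * (h'.val * h.val) =
          A * (h'.val - (1 + B)) + (h.val - (1 + A)) * B + (h.val - (1 + A)) * (h'.val - (1 + B))
            - B * (h.val - (1 + A)) - (h'.val - (1 + B)) * A - (h'.val - (1 + B)) * (h.val - (1 + A))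
            - (A * B - B * A) * (h'.val * h.val - 1) := by noncomm_ring
      rw [e]
      exact (((((((hA.mul hV').mono hm13.le).add ((hU'.mul hB).mono hII1)).add
        ((hU'.mul hV').mono hII)).sub ((hB.mul hU').mono hI1I)).sub
        ((hV'.mul hA).mono hm31.le)).sub ((hV'.mul hU').mono hII)).sub
        ((hCI.mul hVU1).mono hm31.le)
    refine ⟨⁅h, h'⁆, ?_, ?_⟩
    · rw [commutatorElement_def]
      exact H.mul_mem (H.mul_mem (H.mul_mem hH h'H) (H.inv_mem hH)) (H.inv_mem h'H)
    · have hcval : (⁅h, h'⁆).val * (h'.val * h.val) = h.val * h'.val := by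
        have e1 : ⁅h, h'⁆ * (h' * h) = h * h' := by group
        have e2 := congrArg Subtype.val e1
        rw [val_mul, val_mul, val_mul] at e2
        exact e2
      have hXc : (h'.val * h.val) * ((h' * h)⁻¹).val = 1 := by
        have e2 := val_mul_inv (h' * h)
        rwa [val_mul] at e2
      have e : (⁅h, h'⁆).val - (1 + (A * B - B * A)) =
          ((⁅h, h'⁆).val * (h'.val * h.val)) * ((h' * h)⁻¹).val
            - ((1 + (A * B - B * A)) * (h'.val * h.val)) * ((h' * h)⁻¹).val := by
        rw [mul_assoc ((⁅h, h'⁆).val) (h'.val * h.val) (((h' * h)⁻¹).val),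
          mul_assoc (1 + (A * B - B * A)) (h'.val * h.val) (((h' * h)⁻¹).val),
          hXc, mul_one, mul_one]
      rw [e, ← sub_mul, hcval]
      exact hF.mul_right _
  -- off-diagonal generators
  have G1 : ∀ x ∈ m, ∀ y ∈ m ^ (i + 1), ∀ a b : Fin n, a ≠ b →
      WW H (m ^ (i + 2)) (m ^ (i + 3)) (Matrix.single a b (x * y)) := by
    intro x hx y hy a b hab
    have hxy : x * y ∈ m ^ (i + 2) := by
      rw [← hm12]; exact Ideal.mul_mem_mul hx hy
    rcases h3 with h2u | h3n
    · -- diagonal-conjugation trick, valid when `2 + m` consists of units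
      have hu1 : IsUnit ((1 : R) + x) := by
        by_contra hnu
        have h1m : (1 : R) + x ∈ m := (mem_maximalIdeal _).mpr (mem_nonunits_iff.mpr hnu)
        have h1 : (1 : R) ∈ m := by simpa using m.sub_mem h1m hx
        exact (mem_nonunits_iff.mp ((mem_maximalIdeal _).mp h1)) isUnit_one
      have hu2 : IsUnit ((2 : R) + x) := h2u x hx
      set s' : R := ((hu1.unit⁻¹ : Rˣ) : R) with hs'def
      set t' : R := ((hu2.unit⁻¹ : Rˣ) : R) with ht'def
      have hss' : (1 + x) * s' = 1 := by
        have e := hu1.unit.mul_inv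
        rwa [hu1.unit_spec] at e
      have htt' : (2 + x) * t' = 1 := by
        have e := hu2.unit.mul_inv
        rwa [hu2.unit_spec] at e
      set d : Matrix (Fin n) (Fin n) R :=
        Matrix.diagonal (fun t => if t = a then 1 + x else if t = b then s' else 1) with hddef
      have hdet : d.det = 1 := by
        rw [hddef, Matrix.det_diagonal]
        have hf : ∀ t : Fin n, (if t = a then 1 + x else if t = b then s' else 1)
            = (if t = a then 1 + x else 1) * (if t = b then s' else 1) := by
          intro t
          by_cases h1 : t = a
          · subst h1; simp [hab]
          · by_cases h2 : t = b
            · subst h2; simp [h1]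
            · simp [h1, h2]
        rw [Finset.prod_congr rfl (fun t _ => hf t), Finset.prod_mul_distrib,
          Finset.prod_ite_eq' Finset.univ a (fun _ => (1 : R) + x),
          Finset.prod_ite_eq' Finset.univ b (fun _ => s')]
        simpa using hss'
      have hA : MI (d - 1) m := by
        intro t v
        by_cases htv : t = v
        · subst htv
          simp only [Matrix.sub_apply, hddef, Matrix.diagonal_apply_eq, Matrix.one_apply_eq]
          by_cases h1 : t = a
          · rw [if_pos h1]; simpa using hx
          · by_cases h2 : t = b
            · rw [if_neg h1, if_pos h2]
              have e : s' - 1 = -(x * s') := by linear_combination hss'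
              rw [e]
              exact Submodule.neg_mem _ (m.mul_mem_right s' hx)
            · rw [if_neg h1, if_neg h2, sub_self]; exact m.zero_mem
        · simp only [Matrix.sub_apply, hddef, Matrix.diagonal_apply_ne _ htv,
            Matrix.one_apply_ne htv, sub_zero]
          exact m.zero_mem
      have hdA : ((1 : Matrix (Fin n) (Fin n) R) + (d - 1)).det = 1 := by
        have e : (1 : Matrix (Fin n) (Fin n) R) + (d - 1) = d := by abel
        rw [e]; exact hdet
      have hy' : (1 + x) * t' * y ∈ m ^ (i + 1) := Ideal.mul_mem_left _ _ hy
      have hdB : ((1 : Matrix (Fin n) (Fin n) R)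
          + Matrix.single a b ((1 + x) * t' * y)).det = 1 :=
        Matrix.det_transvection_of_ne a b hab _
      obtain ⟨h, hH, hcom⟩ := com (d - 1) (Matrix.single a b ((1 + x) * t' * y)) hA
        (MI_stdBasisMatrix hy' a b) hdA hdB
      have hC : (d - 1) * Matrix.single a b ((1 + x) * t' * y)
          - Matrix.single a b ((1 + x) * t' * y) * (d - 1) = Matrix.single a b (x * y) := by
        have e1 : (d - 1) * Matrix.single a b ((1 + x) * t' * y)
            - Matrix.single a b ((1 + x) * t' * y) * (d - 1)
            = d * Matrix.single a b ((1 + x) * t' * y)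
              - Matrix.single a b ((1 + x) * t' * y) * d := by noncomm_ring
        rw [e1, hddef]
        ext t v
        simp only [Matrix.sub_apply, Matrix.diagonal_mul, Matrix.mul_diagonal]
        by_cases h1 : a = t ∧ b = v
        · obtain ⟨rfl, rfl⟩ := h1
          simp only [Matrix.single, of_apply, and_self, if_true, if_pos rfl,
            if_neg (Ne.symm hab)]
          linear_combination (-(t' * y)) * hss' + (x * y) * htt'
        · simp only [Matrix.single, of_apply, if_neg h1]
          rw [mul_zero, zero_mul, sub_self]
      rw [hC] at hcom
      exact ⟨MI_stdBasisMatrix hxy a b, h, hH, hcom⟩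
    · -- a third index exists
      obtain ⟨c, hca, hcb⟩ : ∃ c : Fin n, c ≠ a ∧ c ≠ b := by
        by_contra hc
        push_neg at hc
        have hsub : (Finset.univ : Finset (Fin n)) ⊆ {a, b} := by
          intro t _
          rcases eq_or_ne t a with h | h
          · simp [h]
          · simp [hc t h]
        have hcard := Finset.card_le_card hsub
        have h2 : ({a, b} : Finset (Fin n)).card ≤ 2 :=
          (Finset.card_insert_le _ _).trans (by simp)
        rw [Finset.card_univ, Fintype.card_fin] at hcard
        omega
      have hdA : ((1 : Matrix (Fin n) (Fin n) R) + Matrix.single a c x).det = 1 :=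
        Matrix.det_transvection_of_ne a c (Ne.symm hca) x
      have hdB : ((1 : Matrix (Fin n) (Fin n) R) + Matrix.single c b y).det = 1 :=
        Matrix.det_transvection_of_ne c b hcb y
      obtain ⟨h, hH, hcom⟩ := com (Matrix.single a c x) (Matrix.single c b y)
        (MI_stdBasisMatrix hx a c) (MI_stdBasisMatrix hy c b) hdA hdB
      rw [Matrix.single_mul_single_same, Matrix.single_mul_single_of_ne (i := c) (j := b) (k := a) (h := Ne.symm hab) (d := x),
        sub_zero] at hcom
      exact ⟨MI_stdBasisMatrix hxy a b, h, hH, hcom⟩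
  -- a fixed index
  have z : Fin n := ⟨0, by omega⟩
  -- diagonal generators
  have G2 : ∀ x ∈ m, ∀ y ∈ m ^ (i + 1), ∀ a : Fin n, a ≠ z →
      WW H (m ^ (i + 2)) (m ^ (i + 3))
        (Matrix.single a a (x * y) - Matrix.single z z (x * y)) := by
    intro x hx y hy a haz
    have hxy : x * y ∈ m ^ (i + 2) := by rw [← hm12]; exact Ideal.mul_mem_mul hx hy
    have hdA : ((1 : Matrix (Fin n) (Fin n) R) + Matrix.single a z x).det = 1 :=
      Matrix.det_transvection_of_ne a z haz x
    have hdB : ((1 : Matrix (Fin n) (Fin n) R) + Matrix.single z a y).det = 1 :=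
      Matrix.det_transvection_of_ne z a (Ne.symm haz) y
    obtain ⟨h, hH, hcom⟩ := com _ _ (MI_stdBasisMatrix hx a z) (MI_stdBasisMatrix hy z a) hdA hdB
    rw [Matrix.single_mul_single_same, Matrix.single_mul_single_same, mul_comm y x] at hcom
    exact ⟨(MI_stdBasisMatrix hxy a a).sub (MI_stdBasisMatrix hxy z z), h, hH, hcom⟩
  -- generators with arbitrary coefficients
  have GG1 : ∀ ξ ∈ m ^ (i + 2), ∀ a b : Fin n, a ≠ b →
      WW H (m ^ (i + 2)) (m ^ (i + 3)) (Matrix.single a b ξ) := by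
    intro ξ hξ
    rw [← hm12] at hξ
    refine Submodule.mul_induction_on (C := fun ξ => ∀ a b : Fin n, a ≠ b →
      WW H (m ^ (i + 2)) (m ^ (i + 3)) (Matrix.single a b ξ)) hξ
      (fun x hx y hy a b hab => G1 x hx y hy a b hab) ?_
    intro u v hu hv a b hab
    rw [Matrix.single_add]
    exact WW.add hII (hu a b hab) (hv a b hab)
  have GG2 : ∀ ξ ∈ m ^ (i + 2), ∀ a : Fin n,
      WW H (m ^ (i + 2)) (m ^ (i + 3)) (Matrix.single a a ξ - Matrix.single z z ξ) := by
    intro ξ hξ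
    rw [← hm12] at hξ
    refine Submodule.mul_induction_on (C := fun ξ => ∀ a : Fin n,
      WW H (m ^ (i + 2)) (m ^ (i + 3)) (Matrix.single a a ξ - Matrix.single z z ξ)) hξ ?_ ?_
    · intro x hx y hy a
      by_cases haz : a = z
      · subst haz; rw [sub_self]; exact WW.zero
      · exact G2 x hx y hy a haz
    · intro u v hu hv a
      have e : Matrix.single a a (u + v) - Matrix.single z z (u + v)
          = (Matrix.single a a u - Matrix.single z z u)
            + (Matrix.single a a v - Matrix.single z z v) := by
        rw [Matrix.single_add, Matrix.single_add]; abel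
      rw [e]; exact WW.add hII (hu a) (hv a)
  -- now reduce an arbitrary element of the congruence kernel
  intro g
  obtain ⟨h₁, h₁H, hk⟩ := Pj g
  set k := h₁⁻¹ * g with hkdef
  set T : Matrix (Fin n) (Fin n) R := ∑ a : Fin n, ∑ b : Fin n,
    (if a = b then 0 else Matrix.single a b ((k.val - 1) a b)) with hTdef
  set S : Matrix (Fin n) (Fin n) R := ∑ a : Fin n,
    (Matrix.single a a ((k.val - 1) a a) - Matrix.single z z ((k.val - 1) a a)) with hSdef
  set c₀ : R := Matrix.trace (k.val - 1) with hc₀def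
  have hdecomp : k.val - 1 = T + S + Matrix.single z z c₀ := by
    calc k.val - 1 = ∑ a : Fin n, ∑ b : Fin n, Matrix.single a b ((k.val - 1) a b) :=
          Matrix.matrix_eq_sum_single (k.val - 1)
      _ = T + ∑ a : Fin n, Matrix.single a a ((k.val - 1) a a) := ?_
      _ = T + (S + Matrix.single z z c₀) := ?_
      _ = T + S + Matrix.single z z c₀ := by rw [add_assoc]
    · rw [hTdef, ← Finset.sum_add_distrib]
      apply Finset.sum_congr rfl
      intro a _
      have e1 : Matrix.single a a ((k.val - 1) a a)
          = ∑ b : Fin n, (if a = b then Matrix.single a b ((k.val - 1) a b) else 0) := by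
        rw [Finset.sum_ite_eq]; simp
      rw [e1, ← Finset.sum_add_distrib]
      apply Finset.sum_congr rfl
      intro b _
      by_cases hab : a = b <;> simp [hab]
    · congr 1
      have e2 : ∀ a : Fin n, Matrix.single a a ((k.val - 1) a a)
          = (Matrix.single a a ((k.val - 1) a a) - Matrix.single z z ((k.val - 1) a a))
            + Matrix.single z z ((k.val - 1) a a) := fun a => by abel
      rw [Finset.sum_congr rfl (fun a _ => e2 a), Finset.sum_add_distrib, ← hSdef]
      congr 1
      ext t v
      rw [Matrix.sum_apply]
      by_cases h1 : z = t ∧ z = v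
      · simp only [Matrix.single, of_apply, if_pos h1, hc₀def, Matrix.trace, Matrix.diag_apply]
      · simp only [Matrix.single, of_apply, if_neg h1, Finset.sum_const_zero]
  have hWT : WW H (m ^ (i + 2)) (m ^ (i + 3)) T := by
    rw [hTdef]
    refine WW.sum hII _ _ (fun a _ => WW.sum hII _ _ (fun b _ => ?_))
    by_cases hab : a = b
    · rw [if_pos hab]; exact WW.zero
    · rw [if_neg hab]; exact GG1 _ (hk a b) a b hab
  have hWS : WW H (m ^ (i + 2)) (m ^ (i + 3)) S := by
    rw [hSdef]
    exact WW.sum hII _ _ (fun a _ => GG2 _ (hk a a) a)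
  obtain ⟨hMI_TS, h₂, h₂H, h₂e⟩ := WW.add hII hWT hWS
  have hX := inv_approx hMI_TS h₂e hII hJI
  have hid : (h₂⁻¹ * k).val - (1 + Matrix.single z z c₀) =
      ((h₂⁻¹).val - (1 - (T + S))) * k.val - (T + S) * (k.val - 1)
        + ((k.val - 1) - (T + S + Matrix.single z z c₀)) := by
    rw [val_mul]; noncomm_ring
  have h0 : (k.val - 1) - (T + S + Matrix.single z z c₀) = 0 := sub_eq_zero_of_eq hdecomp
  have hfinal : MI ((h₂⁻¹ * k).val - (1 + Matrix.single z z c₀)) (m ^ (i + 3)) := by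
    rw [hid, h0, add_zero]
    exact (hX.mul_right _).sub ((hMI_TS.mul hk).mono hII)
  have hdet1 : ((h₂⁻¹ * k).val).det = 1 := (h₂⁻¹ * k).prop
  have hmapeq := map_eq_of_MI hfinal
  have hmap2 : ((1 : Matrix (Fin n) (Fin n) R) + Matrix.single z z c₀).map
      (Ideal.Quotient.mk (m ^ (i + 3)))
      = 1 + Matrix.single z z (Ideal.Quotient.mk (m ^ (i + 3)) c₀) := by
    ext t v
    simp [Matrix.map_apply, Matrix.one_apply, Matrix.single,
      apply_ite (Ideal.Quotient.mk (m ^ (i + 3)))]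
  have hdetq : (1 : R ⧸ m ^ (i + 3)) = 1 + Ideal.Quotient.mk (m ^ (i + 3)) c₀ := by
    have h1 := RingHom.map_det (Ideal.Quotient.mk (m ^ (i + 3))) ((h₂⁻¹ * k).val)
    rw [RingHom.mapMatrix_apply] at h1
    rw [hdet1, _root_.map_one, hmapeq, hmap2, det_one_add_single] at h1
    exact h1
  have hc₀ : c₀ ∈ m ^ (i + 3) :=
    Ideal.Quotient.eq_zero_iff_mem.mp (left_eq_add.mp hdetq)
  have hkv : MI ((h₂⁻¹ * k).val - 1) (m ^ (i + 3)) := by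
    have e : (h₂⁻¹ * k).val - 1
        = ((h₂⁻¹ * k).val - (1 + Matrix.single z z c₀)) + Matrix.single z z c₀ := by abel
    rw [e]; exact hfinal.add (MI_stdBasisMatrix hc₀ z z)
  refine ⟨h₁ * h₂, H.mul_mem h₁H h₂H, ?_⟩
  have e : (h₁ * h₂)⁻¹ * g = h₂⁻¹ * k := by rw [hkdef, _root_.mul_inv_rev, mul_assoc]
  rw [e]
  exact hkv

end Statement4Aux


open Statement4Aux in
/-- For `n ≥ 2`, `(n,p) ≠ (2,2)` and `(n,|F|) ≠ (2,3)`, a subgroup of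
`SL_n(R)` (`R` Artinian local with residue field `F`) surjecting onto `SL_n(R/m_R²)` is all of
`SL_n(R)`. -/
theorem statement_4
    (p : ℕ) [Fact p.Prime] (F : Type*) [Field F] [Fintype F] [CharP F p]
    (n : ℕ) (hn : 2 ≤ n)
    (h22 : ¬(n = 2 ∧ p = 2)) (h23 : ¬(n = 2 ∧ Fintype.card F = 3))
    (R : Type*) [CommRing R] [IsLocalRing R] [IsArtinianRing R]
    (π : R →+* F) (hπ : Function.Surjective π)
    (hker : RingHom.ker π = maximalIdeal R)
    (H : Subgroup (SpecialLinearGroup (Fin n) R))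
    (Hfull : Subgroup.map
      (SpecialLinearGroup.map (Ideal.Quotient.mk (maximalIdeal R ^ 2))) H = ⊤) :
    H = ⊤ := by
  have hp : p.Prime := Fact.out
  have h3 : (∀ x ∈ maximalIdeal R, IsUnit ((2 : R) + x)) ∨ 3 ≤ n := by
    by_cases hp2 : p = 2
    · right
      rcases Nat.lt_or_ge n 3 with h | h
      · exact absurd ⟨by omega, hp2⟩ h22
      · exact h
    · left
      intro x hx
      by_contra hnu
      have h2m : (2 : R) + x ∈ maximalIdeal R :=
        (mem_maximalIdeal _).mpr (mem_nonunits_iff.mpr hnu)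
      have h2 : (2 : R) ∈ maximalIdeal R := by
        simpa using (maximalIdeal R).sub_mem h2m hx
      have hπ2 : π (2 : R) = 0 := by rw [← RingHom.mem_ker, hker]; exact h2
      have h2F : ((2 : ℕ) : F) = 0 := by
        rw [← map_natCast π 2]
        exact_mod_cast hπ2
      have hdvd : p ∣ 2 := (CharP.cast_eq_zero_iff F p 2).mp h2F
      rcases Nat.prime_two.eq_one_or_self_of_dvd p hdvd with h | h
      · exact hp.one_lt.ne' h
      · exact hp2 h
  have base : ∀ g : SpecialLinearGroup (Fin n) R, ∃ h ∈ H,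
      MI ((h⁻¹ * g).val - 1) (maximalIdeal R ^ 2) := by
    intro g
    have hg : SpecialLinearGroup.map (Ideal.Quotient.mk (maximalIdeal R ^ 2)) g ∈
        Subgroup.map (SpecialLinearGroup.map (Ideal.Quotient.mk (maximalIdeal R ^ 2))) H := by
      rw [Hfull]; trivial
    obtain ⟨h, hH, he⟩ := hg
    refine ⟨h, hH, ?_⟩
    have h1 : SpecialLinearGroup.map (Ideal.Quotient.mk (maximalIdeal R ^ 2)) (h⁻¹ * g) = 1 := by
      rw [_root_.map_mul, map_inv, he, inv_mul_cancel]
    have h3' : ((h⁻¹ * g).val).map (Ideal.Quotient.mk (maximalIdeal R ^ 2)) = 1 := by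
      have h2 := congrArg Subtype.val h1
      rwa [SpecialLinearGroup.map_apply_coe, RingHom.mapMatrix_apply] at h2
    intro a b
    have h4 : (((h⁻¹ * g).val).map (Ideal.Quotient.mk (maximalIdeal R ^ 2))) a b
        = (1 : Matrix (Fin n) (Fin n) (R ⧸ maximalIdeal R ^ 2)) a b := by rw [h3']
    rw [Matrix.map_apply] at h4
    have h5 : (1 : Matrix (Fin n) (Fin n) (R ⧸ maximalIdeal R ^ 2)) a b
        = Ideal.Quotient.mk (maximalIdeal R ^ 2) ((1 : Matrix (Fin n) (Fin n) R) a b) := by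
      by_cases hab : a = b <;> simp [Matrix.one_apply, hab]
    rw [h5] at h4
    have h6 := (Ideal.Quotient.mk_eq_mk_iff_sub_mem _ _).mp h4
    simpa using h6
  obtain ⟨N, hN⟩ := IsArtinianRing.isNilpotent_jacobson_bot (R := R)
  have hmax : maximalIdeal R ^ N = ⊥ := by
    rw [← IsLocalRing.jacobson_eq_maximalIdeal (⊥ : Ideal R) bot_ne_top]
    rw [← Ideal.zero_eq_bot]
    exact hN
  have main : ∀ i : ℕ, ∀ g : SpecialLinearGroup (Fin n) R, ∃ h ∈ H,
      MI ((h⁻¹ * g).val - 1) (maximalIdeal R ^ (i + 2)) := by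
    intro i
    induction i with
    | zero => exact base
    | succ j ih => exact Statement4Aux.step hn h3 H j ih
  rw [eq_top_iff]
  intro g _
  obtain ⟨h, hH, hMI⟩ := main N g
  have hle : maximalIdeal R ^ (N + 2) ≤ ⊥ := by
    rw [← hmax]; exact Ideal.pow_le_pow_right (by omega)
  have hval : (h⁻¹ * g).val = 1 := by
    have hz : (h⁻¹ * g).val - 1 = 0 := by
      ext a b
      have h7 := hle (hMI a b)
      rw [Ideal.mem_bot] at h7
      simpa using h7
    exact sub_eq_zero.mp hz
  have h8 : h⁻¹ * g = 1 := Subtype.ext hval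
  have h9 : h = g := inv_mul_eq_one.mp h8
  exact h9 ▸ hH
end

section
/- Let n ≥ 2 and assume (n, |F|) ∉ {(2,2), (2,3)}. Let R and A be Artinian commutative local rings with residue field F, and let ρ : SL_n(R) → GL_n(A) be a group homomorphism whose composite with the entrywise reduction GL_n(A) → GL_n(F) equals the composite of the entrywise reduction SL_n(R) → SL_n(F) with the inclusion SL_n(F) ⊆ GL_n(F). Then det(ρ(M)) = 1 for every M ∈ SL_n(R); that is, the image of ρ is contained in SL_n(A). -/
open Matrix IsLocalRing
open scoped commutatorElement

namespace St8

variable {n : ℕ} {R : Type*} [CommRing R]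

/-! ### Transvections as elements of `SL` -/

def tSL (i j : Fin n) (h : i ≠ j) (a : R) : SpecialLinearGroup (Fin n) R :=
  ⟨Matrix.transvection i j a, Matrix.det_transvection_of_ne i j h a⟩

@[simp] lemma tSL_coe (i j : Fin n) (h : i ≠ j) (a : R) :
    (tSL i j h a : Matrix (Fin n) (Fin n) R) = Matrix.transvection i j a := rfl

lemma tSL_mul (i j : Fin n) (h : i ≠ j) (a b : R) :
    tSL i j h a * tSL i j h b = tSL i j h (a + b) :=
  Subtype.ext (Matrix.transvection_mul_transvection_same i j h a b)

lemma tSL_zero (i j : Fin n) (h : i ≠ j) :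
    tSL i j h (0 : R) = 1 :=
  Subtype.ext (Matrix.transvection_zero i j)

lemma tSL_inv (i j : Fin n) (h : i ≠ j) (a : R) :
    (tSL i j h a)⁻¹ = tSL i j h (-a) := by
  apply inv_eq_of_mul_eq_one_right
  rw [tSL_mul, add_neg_cancel, tSL_zero]

def trSet (n : ℕ) (R : Type*) [CommRing R] : Set (SpecialLinearGroup (Fin n) R) :=
  { g | ∃ (i j : Fin n) (h : i ≠ j) (a : R), g = tSL i j h a }

lemma tSL_mem (i j : Fin n) (h : i ≠ j) (a : R) :
    tSL i j h a ∈ Subgroup.closure (trSet n R) :=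
  Subgroup.subset_closure ⟨i, j, h, a, rfl⟩

/-! ### std basis matrix helpers -/

lemma std_neg (i j : Fin n) (a : R) :
    single i j (-a) = -single i j a := by
  ext x y; by_cases h : i = x ∧ j = y
  · obtain ⟨rfl, rfl⟩ := h; simp
  · simp [Matrix.single, Matrix.of_apply, h]

lemma diag_mul_std (d : Fin n → R) (i j : Fin n) (c : R) :
    Matrix.diagonal d * single i j c = single i j (d i * c) := by
  ext a b
  rw [Matrix.diagonal_mul]
  by_cases h : i = a ∧ j = b
  · obtain ⟨rfl, rfl⟩ := h; simp
  · simp [Matrix.single, Matrix.of_apply, h]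

lemma std_mul_diag (d : Fin n → R) (i j : Fin n) (c : R) :
    single i j c * Matrix.diagonal d = single i j (c * d j) := by
  ext a b
  rw [Matrix.mul_diagonal]
  by_cases h : i = a ∧ j = b
  · obtain ⟨rfl, rfl⟩ := h; simp
  · simp [Matrix.single, Matrix.of_apply, h]

/-! ### commutator identities -/

lemma comm_matrix3 (i j k : Fin n) (hij : i ≠ j) (hik : i ≠ k) (hkj : k ≠ j) (a : R) :
    transvection i k a * transvection k j 1 * transvection i k (-a) * transvection k j (-1)
      = transvection i j a := by
  simp only [Matrix.transvection, Matrix.add_mul, Matrix.mul_add, Matrix.one_mul, Matrix.mul_one,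
    Matrix.single_mul_single_same, Matrix.single_mul_single_of_ne, hij, hik, hkj,
    hij.symm, hik.symm, hkj.symm, ne_eq, not_false_eq_true, Matrix.zero_mul, Matrix.mul_zero,
    add_zero, zero_add, mul_one, mul_neg, neg_mul, neg_neg, one_mul, std_neg]
  abel

def dfun (i j : Fin n) (u : Rˣ) : Fin n → R :=
  fun k => if k = i then (u : R) else if k = j then ((u⁻¹ : Rˣ) : R) else 1

lemma dfun_prod (i j : Fin n) (hij : i ≠ j) (u : Rˣ) :
    ∏ k, dfun i j u k = 1 := by
  rw [← Finset.prod_subset (Finset.subset_univ ({i, j} : Finset (Fin n)))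
    (fun x _ hx => ?_), Finset.prod_pair hij]
  · simp [dfun, hij, hij.symm]
  · simp only [Finset.mem_insert, Finset.mem_singleton, not_or] at hx
    simp [dfun, hx.1, hx.2]

def dSL (i j : Fin n) (hij : i ≠ j) (u : Rˣ) : SpecialLinearGroup (Fin n) R :=
  ⟨Matrix.diagonal (dfun i j u), by rw [Matrix.det_diagonal]; exact dfun_prod i j hij u⟩

lemma dfun_mul_inv (i j : Fin n) (hij : i ≠ j) (u : Rˣ) (k : Fin n) :
    dfun i j u k * dfun i j u⁻¹ k = 1 := by
  by_cases h1 : k = i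
  · subst h1; simp [dfun]
  · by_cases h2 : k = j <;> simp [dfun, h1, h2, hij, hij.symm]

lemma diag_dfun_mul_inv (i j : Fin n) (hij : i ≠ j) (u : Rˣ) :
    Matrix.diagonal (dfun i j u) * Matrix.diagonal (dfun i j u⁻¹) = 1 := by
  rw [Matrix.diagonal_mul_diagonal]
  have : (fun k => dfun i j u k * dfun i j u⁻¹ k) = fun _ => (1:R) := by
    funext k; exact dfun_mul_inv i j hij u k
  rw [this, Matrix.diagonal_one]

lemma dSL_inv (i j : Fin n) (hij : i ≠ j) (u : Rˣ) :
    (dSL i j hij u)⁻¹ = dSL i j hij u⁻¹ := by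
  apply inv_eq_of_mul_eq_one_right
  apply Subtype.ext
  exact diag_dfun_mul_inv i j hij u

lemma comm_matrix2 (i j : Fin n) (hij : i ≠ j) (u : Rˣ) (b : R) :
    Matrix.diagonal (dfun i j u) * transvection i j b * Matrix.diagonal (dfun i j u⁻¹) *
      transvection i j (-b) = transvection i j ((u : R) * u * b - b) := by
  have h1 : dfun i j u i = (u : R) := by simp [dfun]
  have h2 : dfun i j (u⁻¹) j = (u : R) := by simp [dfun, hij.symm]
  simp only [Matrix.transvection, Matrix.mul_add, Matrix.add_mul, Matrix.mul_one, Matrix.one_mul,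
    diag_dfun_mul_inv i j hij u, std_mul_diag, diag_mul_std, h1, h2,
    Matrix.single_mul_single_of_ne, ne_eq, hij.symm, not_false_eq_true]
  rw [add_zero, add_assoc, ← Matrix.single_add]
  congr 1
  ring

/-- every transvection is a commutator -/
lemma tSL_mem_commutator (hcase : 3 ≤ n ∨ ∃ u : Rˣ, IsUnit ((u : R) * u - 1))
    (i j : Fin n) (h : i ≠ j) (a : R) :
    tSL i j h a ∈ commutator (SpecialLinearGroup (Fin n) R) := by
  rcases hcase with h3 | ⟨u, hu⟩
  · have hcard : ({i, j} : Finset (Fin n)) ⊂ Finset.univ := by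
      refine Finset.ssubset_univ_iff.mpr fun he => ?_
      have : Fintype.card (Fin n) ≤ 2 := by
        rw [← Finset.card_univ, ← he]
        exact le_trans (Finset.card_insert_le _ _) (by simp)
      simp only [Fintype.card_fin] at this
      omega
    obtain ⟨k, _, hk⟩ := Finset.exists_of_ssubset hcard
    simp only [Finset.mem_insert, Finset.mem_singleton, not_or] at hk
    have hik : i ≠ k := fun e => hk.1 e.symm
    have hkj : k ≠ j := hk.2
    have key : tSL i j h a = ⁅tSL i k hik a, tSL k j hkj (1 : R)⁆ := by
      rw [commutatorElement_def, tSL_inv, tSL_inv]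
      apply Subtype.ext
      simp only [Matrix.SpecialLinearGroup.coe_mul, tSL_coe]
      exact (comm_matrix3 i j k h hik hkj a).symm
    rw [key, commutator_def]
    exact Subgroup.commutator_mem_commutator (Subgroup.mem_top _) (Subgroup.mem_top _)
  · obtain ⟨w, hw⟩ := hu
    have key : tSL i j h a = ⁅dSL i j h u, tSL i j h ((w⁻¹ : Rˣ) * a)⁆ := by
      rw [commutatorElement_def, tSL_inv, dSL_inv]
      apply Subtype.ext
      simp only [Matrix.SpecialLinearGroup.coe_mul, tSL_coe]
      show _ = Matrix.diagonal (dfun i j u) * transvection i j _ *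
        Matrix.diagonal (dfun i j u⁻¹) * transvection i j _
      rw [comm_matrix2 i j h u]
      have : (u : R) * u * ((w⁻¹ : Rˣ) * a) - ((w⁻¹ : Rˣ) * a)
          = ((u : R) * u - 1) * ((w⁻¹ : Rˣ) * a) := by ring
      rw [this, ← hw, ← mul_assoc, Units.mul_inv, one_mul]
    rw [key, commutator_def]
    exact Subgroup.commutator_mem_commutator (Subgroup.mem_top _) (Subgroup.mem_top _)

/-! ### mass row/column operations -/

lemma massCol (r : Fin n) (c : Fin n → R) (s : Finset (Fin n)) (hs : r ∉ s) :
    ∃ g ∈ Subgroup.closure (trSet n R),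
      (g : Matrix (Fin n) (Fin n) R) = 1 + ∑ i ∈ s, single i r (c i) := by
  induction s using Finset.induction_on with
  | empty => exact ⟨1, Subgroup.one_mem _, by simp⟩
  | @insert a s ha ih =>
      have har : a ≠ r := fun h => hs (h ▸ Finset.mem_insert_self a s)
      obtain ⟨g, hg, hgval⟩ := ih (fun h => hs (Finset.mem_insert_of_mem h))
      refine ⟨tSL a r har (c a) * g, Subgroup.mul_mem _ (tSL_mem _ _ _ _) hg, ?_⟩
      have : ((tSL a r har (c a) * g : SpecialLinearGroup (Fin n) R) :
          Matrix (Fin n) (Fin n) R) = Matrix.transvection a r (c a) * g := rfl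
      rw [this, hgval, Matrix.transvection, Finset.sum_insert ha]
      rw [Matrix.add_mul, Matrix.mul_add, Matrix.mul_add, Matrix.one_mul, Matrix.mul_one,
        Matrix.one_mul, Finset.mul_sum]
      have hz : ∀ i ∈ s, single a r (c a) * single i r (c i) = 0 := by
        intro i hi
        have hri : r ≠ i := fun h => hs (h ▸ Finset.mem_insert_of_mem hi)
        exact Matrix.single_mul_single_of_ne (h := hri) ..
      rw [Finset.sum_eq_zero hz]
      abel

lemma massRow (r : Fin n) (c : Fin n → R) (s : Finset (Fin n)) (hs : r ∉ s) :
    ∃ g ∈ Subgroup.closure (trSet n R),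
      (g : Matrix (Fin n) (Fin n) R) = 1 + ∑ j ∈ s, single r j (c j) := by
  induction s using Finset.induction_on with
  | empty => exact ⟨1, Subgroup.one_mem _, by simp⟩
  | @insert a s ha ih =>
      have har : r ≠ a := fun h => hs (h ▸ Finset.mem_insert_self a s)
      obtain ⟨g, hg, hgval⟩ := ih (fun h => hs (Finset.mem_insert_of_mem h))
      refine ⟨g * tSL r a har (c a), Subgroup.mul_mem _ hg (tSL_mem _ _ _ _), ?_⟩
      have : ((g * tSL r a har (c a) : SpecialLinearGroup (Fin n) R) :
          Matrix (Fin n) (Fin n) R) = (g : Matrix (Fin n) (Fin n) R) *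
          Matrix.transvection r a (c a) := rfl
      rw [this, hgval, Matrix.transvection, Finset.sum_insert ha]
      simp only [Matrix.mul_add, Matrix.add_mul, Matrix.one_mul, Matrix.mul_one, Finset.sum_mul]
      have hz : ∀ j ∈ s, single r j (c j) * single r a (c a) = 0 := by
        intro j hj
        have hjr : j ≠ r := fun h => hs (h ▸ Finset.mem_insert_of_mem hj)
        exact Matrix.single_mul_single_of_ne (h := hjr) ..
      rw [Finset.sum_eq_zero hz]
      abel

lemma add_sum_col_mul (c : Fin n → R) (r : Fin n) (s : Finset (Fin n))
    (M : Matrix (Fin n) (Fin n) R) (a b : Fin n) :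
    ((1 + ∑ i ∈ s, single i r (c i)) * M) a b
      = M a b + (if a ∈ s then c a * M r b else 0) := by
  rw [Matrix.add_mul, Matrix.one_mul, Matrix.add_apply, Finset.sum_mul, Matrix.sum_apply]
  congr 1
  have h : ∀ i ∈ s, (single i r (c i) * M) a b = if i = a then c i * M r b else 0 := by
    intro i _
    by_cases hia : i = a
    · subst hia; simp
    · rw [Matrix.single_mul_apply_of_ne (h := Ne.symm hia), if_neg hia]
  rw [Finset.sum_congr rfl h, Finset.sum_ite_eq' s a (fun i => c i * M r b)]

lemma mul_add_sum_row (c : Fin n → R) (r : Fin n) (s : Finset (Fin n))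
    (M : Matrix (Fin n) (Fin n) R) (a b : Fin n) :
    (M * (1 + ∑ j ∈ s, single r j (c j))) a b
      = M a b + (if b ∈ s then M a r * c b else 0) := by
  rw [Matrix.mul_add, Matrix.mul_one, Matrix.add_apply, Finset.mul_sum, Matrix.sum_apply]
  congr 1
  have h : ∀ j ∈ s, (M * single r j (c j)) a b = if j = b then M a r * c j else 0 := by
    intro j _
    by_cases hjb : j = b
    · subst hjb; simp
    · rw [Matrix.mul_single_apply_of_ne (hbj := Ne.symm hjb), if_neg hjb]
  rw [Finset.sum_congr rfl h, Finset.sum_ite_eq' s b (fun j => M a r * c j)]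

/-! ### local ring helpers -/

lemma unit_add_nonunit {R : Type*} [CommRing R] [IsLocalRing R] {x y : R}
    (hx : ¬IsUnit x) (hy : IsUnit y) : IsUnit (x + y) := by
  by_contra hxy
  have h2 : -x ∈ nonunits R := fun h => hx (by simpa using h.neg)
  have h3 := IsLocalRing.nonunits_add (hxy : x + y ∈ nonunits R) h2
  have e : x + y + -x = y := by ring
  rw [e] at h3
  exact h3 hy

lemma exists_isUnit_col {R : Type*} [CommRing R] [IsLocalRing R] {n : ℕ}
    (M : SpecialLinearGroup (Fin n) R) (j : Fin n) :
    ∃ i, IsUnit ((M : Matrix (Fin n) (Fin n) R) i j) := by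
  by_contra hc
  push_neg at hc
  have hres : ∀ i, IsLocalRing.residue R ((M : Matrix (Fin n) (Fin n) R) i j) = 0 := by
    intro i
    exact Ideal.Quotient.eq_zero_iff_mem.mpr ((IsLocalRing.mem_maximalIdeal _).mpr (hc i))
  have h1 : (((M : Matrix (Fin n) (Fin n) R)).map (IsLocalRing.residue R)).det = 1 := by
    rw [← RingHom.mapMatrix_apply, ← RingHom.map_det, M.prop, _root_.map_one]
  have h0 : (((M : Matrix (Fin n) (Fin n) R)).map (IsLocalRing.residue R)).det = 0 :=
    Matrix.det_eq_zero_of_column_eq_zero j (fun i => by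
      rw [Matrix.map_apply]; exact hres i)
  rw [h1] at h0
  exact one_ne_zero h0

/-! ### generation by transvections -/

lemma gen_aux {R : Type*} [CommRing R] [IsLocalRing R] {n : ℕ} :
    ∀ d r : ℕ, n ≤ r + 1 + d → ∀ M : SpecialLinearGroup (Fin n) R,
      (∀ i j : Fin n, (i.val < r ∨ j.val < r) →
        (M : Matrix (Fin n) (Fin n) R) i j = if i = j then 1 else 0) →
      M ∈ Subgroup.closure (trSet n R) := by
  intro d
  induction d with
  | zero =>
      intro r hr M hM
      have hoff : ∀ a b : Fin n, a ≠ b → (M : Matrix (Fin n) (Fin n) R) a b = 0 := by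
        intro a b hab
        have : a.val < r ∨ b.val < r := by
          have h1 : a.val < n := a.isLt
          have h2 : b.val < n := b.isLt
          have h3 : a.val ≠ b.val := fun e => hab (Fin.ext e)
          omega
        rw [hM a b this, if_neg hab]
      have hdiag : (M : Matrix (Fin n) (Fin n) R)
          = Matrix.diagonal (fun k => (M : Matrix (Fin n) (Fin n) R) k k) := by
        ext a b
        by_cases hab : a = b
        · subst hab; simp
        · rw [Matrix.diagonal_apply_ne _ hab]; exact hoff a b hab
      have hM1 : M = 1 := by
        apply Subtype.ext
        show (M : Matrix (Fin n) (Fin n) R) = 1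
        ext a b
        by_cases hab : a = b
        · subst hab
          by_cases har : a.val < r
          · rw [hM a a (Or.inl har)]; simp
          · -- use determinant
            have hdet := M.prop
            rw [hdiag, Matrix.det_diagonal] at hdet
            have hprod : ∏ k, (M : Matrix (Fin n) (Fin n) R) k k
                = (M : Matrix (Fin n) (Fin n) R) a a := by
              apply Finset.prod_eq_single a
              · intro b _ hba
                have : b.val < r := by
                  have h1 : b.val < n := b.isLt
                  have h2 : a.val < n := a.isLt
                  have h3 : b.val ≠ a.val := fun e => hba (Fin.ext e)
                  omega
                rw [hM b b (Or.inl this)]; simp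
              · intro h; exact absurd (Finset.mem_univ a) h
            rw [hprod] at hdet
            rw [hdet]; simp
        · rw [hoff a b hab, Matrix.one_apply_ne hab]
      rw [hM1]; exact Subgroup.one_mem _
  | succ d ih =>
      intro r hr M hM
      by_cases hnr : n ≤ r + 1 + d
      · exact ih r hnr M hM
      · have hr1 : r + 1 < n := by omega
        have hrn : r < n := by omega
        set ri : Fin n := ⟨r, hrn⟩ with hri
        set ri1 : Fin n := ⟨r + 1, hr1⟩ with hri1
        have hvri : (ri : ℕ) = r := rfl
        have hvri1 : (ri1 : ℕ) = r + 1 := rfl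
        have hne : ri ≠ ri1 := Fin.ne_of_val_ne (by rw [hvri, hvri1]; omega)
        -- Phase A : get a unit in position (ri1, ri)
        obtain ⟨N₁, tA, htA, hN₁eq, hHr₁, hu₁⟩ :
            ∃ (N₁ tA : SpecialLinearGroup (Fin n) R), tA ∈ Subgroup.closure (trSet n R) ∧
              N₁ = tA * M ∧
              (∀ a b : Fin n, (a.val < r ∨ b.val < r) →
                (N₁ : Matrix (Fin n) (Fin n) R) a b = if a = b then 1 else 0) ∧
              IsUnit ((N₁ : Matrix (Fin n) (Fin n) R) ri1 ri) := by
          by_cases hu : IsUnit ((M : Matrix (Fin n) (Fin n) R) ri1 ri)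
          · exact ⟨M, 1, Subgroup.one_mem _, (one_mul M).symm, hM, hu⟩
          · obtain ⟨i, hi⟩ := exists_isUnit_col M ri
            have hige : r ≤ i.val := by
              by_contra hlt
              push_neg at hlt
              have hz : (M : Matrix (Fin n) (Fin n) R) i ri = 0 := by
                rw [hM i ri (Or.inl hlt), if_neg (Fin.ne_of_val_ne (by rw [hvri]; omega))]
              rw [hz] at hi
              exact not_isUnit_zero hi
            have hine1 : ri1 ≠ i := fun e => hu (e ▸ hi)
            refine ⟨tSL ri1 i hine1 1 * M, tSL ri1 i hine1 1, tSL_mem _ _ _ _, rfl, ?_, ?_⟩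
            · intro a b hab
              have hcoe : ((tSL ri1 i hine1 1 * M : SpecialLinearGroup (Fin n) R) :
                  Matrix (Fin n) (Fin n) R)
                  = transvection ri1 i 1 * (M : Matrix (Fin n) (Fin n) R) := rfl
              by_cases ha : a = ri1
              · subst ha
                have hblt : b.val < r := by
                  rcases hab with h | h
                  · exact absurd (h : r + 1 < r) (by omega)
                  · exact h
                have hab' : ri1 ≠ b := Fin.ne_of_val_ne (by rw [hvri1]; omega)
                have hib : i ≠ b := Fin.ne_of_val_ne (by omega)
                rw [hcoe, Matrix.transvection_mul_apply_same, one_mul,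
                  hM ri1 b (Or.inr hblt), hM i b (Or.inr hblt)]
                simp [hab', hib]
              · rw [hcoe, Matrix.transvection_mul_apply_of_ne _ _ _ _ ha, hM a b hab]
            · have hcoe : ((tSL ri1 i hine1 1 * M : SpecialLinearGroup (Fin n) R) :
                  Matrix (Fin n) (Fin n) R)
                  = transvection ri1 i 1 * (M : Matrix (Fin n) (Fin n) R) := rfl
              rw [hcoe, Matrix.transvection_mul_apply_same, one_mul]
              exact unit_add_nonunit hu hi
        -- Phase B : make the pivot equal to 1
        obtain ⟨u, hu⟩ := hu₁
        set t : R := (1 - (N₁ : Matrix (Fin n) (Fin n) R) ri ri) * (u⁻¹ : Rˣ) with ht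
        set N₂ : SpecialLinearGroup (Fin n) R := tSL ri ri1 hne t * N₁ with hN₂def
        have hcoe₂ : (N₂ : Matrix (Fin n) (Fin n) R)
            = transvection ri ri1 t * (N₁ : Matrix (Fin n) (Fin n) R) := rfl
        have hHr₂ : ∀ a b : Fin n, (a.val < r ∨ b.val < r) →
            (N₂ : Matrix (Fin n) (Fin n) R) a b = if a = b then 1 else 0 := by
          intro a b hab
          by_cases ha : a = ri
          · subst ha
            have hblt : b.val < r := by
              rcases hab with h | h
              · exact absurd (h : r < r) (by omega)
              · exact h
            have hab' : ri ≠ b := Fin.ne_of_val_ne (by rw [hvri]; omega)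
            have h1b : ri1 ≠ b := Fin.ne_of_val_ne (by rw [hvri1]; omega)
            rw [hcoe₂, Matrix.transvection_mul_apply_same,
              hHr₁ ri b (Or.inr hblt), hHr₁ ri1 b (Or.inr hblt)]
            simp [hab', h1b]
          · rw [hcoe₂, Matrix.transvection_mul_apply_of_ne _ _ _ _ ha, hHr₁ a b hab]
        have hpiv₂ : (N₂ : Matrix (Fin n) (Fin n) R) ri ri = 1 := by
          rw [hcoe₂, Matrix.transvection_mul_apply_same, ht, ← hu]
          rw [mul_assoc, Units.inv_mul, mul_one]
          ring
        -- Phase C : clear the column ri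
        set s : Finset (Fin n) := Finset.univ.erase ri with hs
        have hris : ri ∉ s := Finset.notMem_erase _ _
        set c : Fin n → R := fun i => -((N₂ : Matrix (Fin n) (Fin n) R) i ri) with hc
        obtain ⟨gC, hgC, hgCval⟩ := massCol ri c s hris
        set N₃ : SpecialLinearGroup (Fin n) R := gC * N₂ with hN₃def
        have hcoe₃ : ∀ a b : Fin n, (N₃ : Matrix (Fin n) (Fin n) R) a b
            = (N₂ : Matrix (Fin n) (Fin n) R) a b
              + (if a ∈ s then c a * (N₂ : Matrix (Fin n) (Fin n) R) ri b else 0) := by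
          intro a b
          have : (N₃ : Matrix (Fin n) (Fin n) R)
              = (gC : Matrix (Fin n) (Fin n) R) * (N₂ : Matrix (Fin n) (Fin n) R) := rfl
          rw [this, hgCval, add_sum_col_mul]
        have hmem_s : ∀ a : Fin n, a ≠ ri → a ∈ s := by
          intro a ha; rw [hs]; exact Finset.mem_erase.mpr ⟨ha, Finset.mem_univ a⟩
        have hcol₃ : ∀ a : Fin n, a ≠ ri → (N₃ : Matrix (Fin n) (Fin n) R) a ri = 0 := by
          intro a ha
          rw [hcoe₃, if_pos (hmem_s a ha), hpiv₂, hc]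
          ring
        have hpiv₃ : (N₃ : Matrix (Fin n) (Fin n) R) ri ri = 1 := by
          rw [hcoe₃, if_neg hris, add_zero, hpiv₂]
        have hHr₃ : ∀ a b : Fin n, (a.val < r ∨ b.val < r) →
            (N₃ : Matrix (Fin n) (Fin n) R) a b = if a = b then 1 else 0 := by
          intro a b hab
          rw [hcoe₃]
          rcases hab with h | h
          · have ha : a ≠ ri := Fin.ne_of_val_ne (by rw [hvri]; omega)
            have hca : c a = 0 := by
              rw [hc]
              simp only
              rw [hHr₂ a ri (Or.inl h), if_neg ha, neg_zero]
            rw [hHr₂ a b (Or.inl h)]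
            split_ifs with hmem <;> simp [hca]
          · have hb : ri ≠ b := Fin.ne_of_val_ne (by rw [hvri]; omega)
            rw [hHr₂ ri b (Or.inr h), if_neg hb, hHr₂ a b (Or.inr h)]
            split_ifs with hmem <;> simp
        -- Phase D : clear the row ri
        set e : Fin n → R := fun j => -((N₃ : Matrix (Fin n) (Fin n) R) ri j) with he
        obtain ⟨gR, hgR, hgRval⟩ := massRow ri e s hris
        set N₄ : SpecialLinearGroup (Fin n) R := N₃ * gR with hN₄def
        have hcoe₄ : ∀ a b : Fin n, (N₄ : Matrix (Fin n) (Fin n) R) a b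
            = (N₃ : Matrix (Fin n) (Fin n) R) a b
              + (if b ∈ s then (N₃ : Matrix (Fin n) (Fin n) R) a ri * e b else 0) := by
          intro a b
          have : (N₄ : Matrix (Fin n) (Fin n) R)
              = (N₃ : Matrix (Fin n) (Fin n) R) * (gR : Matrix (Fin n) (Fin n) R) := rfl
          rw [this, hgRval, mul_add_sum_row]
        have hrow₄ : ∀ b : Fin n, b ≠ ri → (N₄ : Matrix (Fin n) (Fin n) R) ri b = 0 := by
          intro b hb
          rw [hcoe₄, if_pos (hmem_s b hb), hpiv₃, he]
          ring
        have hcol₄ : ∀ a : Fin n, a ≠ ri → (N₄ : Matrix (Fin n) (Fin n) R) a ri = 0 := by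
          intro a ha
          rw [hcoe₄, if_neg hris, add_zero, hcol₃ a ha]
        have hpiv₄ : (N₄ : Matrix (Fin n) (Fin n) R) ri ri = 1 := by
          rw [hcoe₄, if_neg hris, add_zero, hpiv₃]
        have hHr₄ : ∀ a b : Fin n, (a.val < r + 1 ∨ b.val < r + 1) →
            (N₄ : Matrix (Fin n) (Fin n) R) a b = if a = b then 1 else 0 := by
          intro a b hab
          by_cases ha : a = ri
          · subst ha
            by_cases hb : b = ri
            · subst hb; rw [hpiv₄, if_pos rfl]
            · rw [hrow₄ b (fun e => hb e), if_neg (fun e => hb e.symm)]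
          · by_cases hb : b = ri
            · subst hb; rw [hcol₄ a ha, if_neg ha]
            · -- both different from ri; then a.val < r or b.val < r
              have hab' : a.val < r ∨ b.val < r := by
                have h1 : a.val ≠ r := fun e => ha (Fin.ext (by rw [hvri]; exact e))
                have h2 : b.val ≠ r := fun e => hb (Fin.ext (by rw [hvri]; exact e))
                omega
              rw [hcoe₄]
              rcases hab' with h | h
              · have hari : a ≠ ri := ha
                have h3 : (N₃ : Matrix (Fin n) (Fin n) R) a ri = 0 := hcol₃ a hari
                rw [hHr₃ a b (Or.inl h), h3]
                split_ifs with hmem <;> simp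
              · have heb : e b = 0 := by
                  rw [he]
                  simp only
                  rw [hHr₃ ri b (Or.inr h), if_neg (Fin.ne_of_val_ne (by rw [hvri]; omega)),
                    neg_zero]
                rw [hHr₃ a b (Or.inr h)]
                split_ifs with hmem <;> simp [heb]
        -- conclude by the induction hypothesis
        have hN₄mem : N₄ ∈ Subgroup.closure (trSet n R) :=
          ih (r + 1) (by omega) N₄ hHr₄
        have ht2 : tSL ri ri1 hne t ∈ Subgroup.closure (trSet n R) := tSL_mem _ _ _ _
        have hN₃mem : N₃ ∈ Subgroup.closure (trSet n R) := by
          have : N₃ = N₄ * gR⁻¹ := by rw [hN₄def]; group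
          rw [this]; exact Subgroup.mul_mem _ hN₄mem (Subgroup.inv_mem _ hgR)
        have hN₂mem : N₂ ∈ Subgroup.closure (trSet n R) := by
          have : N₂ = gC⁻¹ * N₃ := by rw [hN₃def]; group
          rw [this]; exact Subgroup.mul_mem _ (Subgroup.inv_mem _ hgC) hN₃mem
        have hN₁mem : N₁ ∈ Subgroup.closure (trSet n R) := by
          have : N₁ = (tSL ri ri1 hne t)⁻¹ * N₂ := by rw [hN₂def]; group
          rw [this]; exact Subgroup.mul_mem _ (Subgroup.inv_mem _ ht2) hN₂mem
        have : M = tA⁻¹ * N₁ := by rw [hN₁eq]; group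
        rw [this]; exact Subgroup.mul_mem _ (Subgroup.inv_mem _ htA) hN₁mem

lemma gen {R : Type*} [CommRing R] [IsLocalRing R] {n : ℕ}
    (M : SpecialLinearGroup (Fin n) R) : M ∈ Subgroup.closure (trSet n R) :=
  gen_aux n 0 (by omega) M (fun i j h => absurd h (by omega))

theorem sl_perfect {R : Type*} [CommRing R] [IsLocalRing R] {n : ℕ}
    (hcase : 3 ≤ n ∨ ∃ u : Rˣ, IsUnit ((u : R) * u - 1))
    (M : SpecialLinearGroup (Fin n) R) :
    M ∈ commutator (SpecialLinearGroup (Fin n) R) := by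
  have h1 : Subgroup.closure (trSet n R) ≤ commutator (SpecialLinearGroup (Fin n) R) := by
    rw [Subgroup.closure_le]
    rintro x ⟨i, j, h, a, rfl⟩
    exact tSL_mem_commutator hcase i j h a
  exact h1 (gen M)

end St8

open St8

/-- For `n ≥ 2` and `(n,|F|) ∉ {(2,2), (2,3)}`, any homomorphism
`ρ : SL_n(R) → GL_n(A)` (with `R`, `A` Artinian local with residue field `F`) lifting the
residual representation `SL_n(R) → SL_n(F) ⊆ GL_n(F)` takes values in `SL_n(A)`. -/
theorem statement_8
    (p : ℕ) [Fact p.Prime] (F : Type*) [Field F] [Fintype F] [CharP F p]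
    (n : ℕ) (hn : 2 ≤ n)
    (h22 : ¬(n = 2 ∧ Fintype.card F = 2)) (h23 : ¬(n = 2 ∧ Fintype.card F = 3))
    (R : Type*) [CommRing R] [IsLocalRing R] [IsArtinianRing R]
    (πR : R →+* F) (hπR : Function.Surjective πR)
    (hkerR : RingHom.ker πR = maximalIdeal R)
    (A : Type*) [CommRing A] [IsLocalRing A] [IsArtinianRing A]
    (πA : A →+* F) (hπA : Function.Surjective πA)
    (hkerA : RingHom.ker πA = maximalIdeal A)
    (ρ : SpecialLinearGroup (Fin n) R →* GL (Fin n) A)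
    (hred : (Matrix.GeneralLinearGroup.map πA).comp ρ =
      SpecialLinearGroup.toGL.comp (SpecialLinearGroup.map πR)) :
    ∀ M : SpecialLinearGroup (Fin n) R,
      ((ρ M : Matrix (Fin n) (Fin n) A)).det = 1 := by
  intro M
  classical
  have hunit : ∀ x : R, πR x ≠ 0 → IsUnit x := by
    intro x hx
    by_contra hxu
    have hmem : x ∈ maximalIdeal R := (mem_maximalIdeal x).mpr hxu
    rw [← hkerR] at hmem
    exact hx hmem
  have hcase : 3 ≤ n ∨ ∃ u : Rˣ, IsUnit ((u : R) * u - 1) := by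
    by_cases h2 : n = 2
    · right
      have hcard : 4 ≤ Fintype.card F := by
        have h1 : 1 < Fintype.card F := Fintype.one_lt_card
        have hc2 : Fintype.card F ≠ 2 := fun e => h22 ⟨h2, e⟩
        have hc3 : Fintype.card F ≠ 3 := fun e => h23 ⟨h2, e⟩
        omega
      obtain ⟨g, hg⟩ := IsCyclic.exists_generator (α := Fˣ)
      have hord : orderOf g = Fintype.card F - 1 := by
        rw [orderOf_eq_card_of_forall_mem_zpowers hg, Nat.card_eq_fintype_card,
          Fintype.card_units]
      have hg1 : (g : F) * g - 1 ≠ 0 := by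
        intro hzero
        have hgg : ((g * g : Fˣ) : F) = ((1 : Fˣ) : F) := by
          push_cast
          exact sub_eq_zero.mp hzero
        have h2' : g ^ 2 = 1 := by rw [pow_two]; exact Units.ext hgg
        have hdvd : orderOf g ∣ 2 := orderOf_dvd_of_pow_eq_one h2'
        have := Nat.le_of_dvd (by norm_num) hdvd
        omega
      obtain ⟨u₀, hu₀⟩ := hπR (g : F)
      have hu₀unit : IsUnit u₀ := hunit u₀ (by rw [hu₀]; exact Units.ne_zero g)
      obtain ⟨u, rfl⟩ := hu₀unit
      refine ⟨u, hunit _ ?_⟩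
      rw [_root_.map_sub, _root_.map_mul, _root_.map_one, hu₀]
      exact hg1
    · left; omega
  have hM := sl_perfect hcase M
  set χ : SpecialLinearGroup (Fin n) R →* Aˣ :=
    (Matrix.GeneralLinearGroup.det).comp ρ with hχ
  have hker : commutator (SpecialLinearGroup (Fin n) R) ≤ χ.ker := by
    rw [commutator_def, Subgroup.commutator_le]
    intro g _ h _
    rw [MonoidHom.mem_ker, map_commutatorElement]
    exact commutatorElement_eq_one_iff_commute.mpr (mul_comm _ _)
  have h1 : χ M = 1 := hker hM
  have h2 : ((χ M : Aˣ) : A) = 1 := by rw [h1]; rfl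
  exact h2
end

section
/- Let p be a prime, H a finite group, and N a normal subgroup of H that is a p-group; write Q = H/N and assume the abelianization Q/[Q,Q] has order coprime to p. Then there exists a unique subgroup K of H containing the commutator subgroup [H, H] such that the homomorphism K/[H, H] → Q/[Q, Q] induced by the quotient map H → Q is an isomorphism. -/
/-- In a commutative group, a subgroup `C` that is disjoint from a `p`-subgroup `L`,
with `L ⊔ C = ⊤`, and such that every `m`-th power lies in `L` (with `m` coprime to `p`),
is exactly the subgroup of elements killed by `m`. -/
lemma aux_compl_eq {G : Type*} [CommGroup G] (p m : ℕ)
    (L C : Subgroup G) (hL : IsPGroup p L) (hm : m.Coprime p)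
    (hd : ∀ x : G, x ∈ L → x ∈ C → x = 1) (hs : L ⊔ C = ⊤)
    (hGm : ∀ g : G, g ^ m ∈ L) :
    C = (powMonoidHom m : G →* G).ker := by
  ext g
  simp only [MonoidHom.mem_ker, powMonoidHom_apply]
  constructor
  · intro hg
    exact hd _ (hGm g) (pow_mem hg m)
  · intro hg
    have : g ∈ L ⊔ C := hs ▸ Subgroup.mem_top g
    rcases Subgroup.mem_sup.mp this with ⟨l, hl, c, hc, rfl⟩
    have hlm : l ^ m = 1 := by
      have h1 : l ^ m ∈ L := pow_mem hl m
      have h2 : l ^ m ∈ C := by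
        have : l ^ m = (l * c) ^ m * (c ^ m)⁻¹ := by
          rw [mul_pow]; group
        rw [this, hg, one_mul]
        exact inv_mem (pow_mem hc m)
      exact hd _ h1 h2
    obtain ⟨k, hk⟩ := hL ⟨l, hl⟩
    have hlp : l ^ p ^ k = 1 := by
      have := congrArg (Subgroup.subtype L) hk
      simpa using this
    have h1 : orderOf l ∣ m := orderOf_dvd_of_pow_eq_one hlm
    have h2 : orderOf l ∣ p ^ k := orderOf_dvd_of_pow_eq_one hlp
    have : orderOf l ∣ 1 := (hm.pow_right k) ▸ Nat.dvd_gcd h1 h2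
    have hl1 : l = 1 := orderOf_eq_one_iff.mp (Nat.dvd_one.mp this)
    rw [hl1, one_mul]
    exact hc

/-- Let `H` be a finite group, `N ⊴ H` a normal `p`-subgroup with
`Q = H/N` such that `|Q/[Q,Q]|` is coprime to `p`.  Then there is a unique subgroup `K` of `H`
containing `[H,H]` for which the induced map `K/[H,H] → Q/[Q,Q]` is an isomorphism;
here the induced map is realized through `f : H → Q → Q/[Q,Q]`, and the isomorphism property
is expressed as: `f` restricted to `K` is surjective, and its kernel within `K` is `[H,H]`. -/
theorem statement_9
    (p : ℕ) (hp : p.Prime) (H : Type*) [Group H] [Finite H]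
    (N : Subgroup H) [N.Normal] (hN : IsPGroup p N)
    (hQ : (Nat.card (Abelianization (H ⧸ N))).Coprime p) :
    ∃! K : Subgroup H,
      commutator H ≤ K ∧
      Subgroup.map ((Abelianization.of).comp (QuotientGroup.mk' N)) K = ⊤ ∧
      ∀ x ∈ K, Abelianization.of (QuotientGroup.mk' N x) = 1 → x ∈ commutator H := by
  classical
  set A := Abelianization (H ⧸ N)
  set m := Nat.card A with hm_def
  set f : H →* A := (Abelianization.of).comp (QuotientGroup.mk' N) with hf_def
  set G := Abelianization H
  set ρ : H →* G := Abelianization.of with hρ_def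
  -- basic facts about ρ
  have hρ_surj : Function.Surjective ρ := fun x =>
    Quotient.inductionOn' x (fun a => ⟨a, rfl⟩)
  have hρ_ker : ∀ x : H, ρ x = 1 ↔ x ∈ commutator H := fun x =>
    QuotientGroup.eq_one_iff x
  -- the induced map φ : G → A
  set φ : G →* A := Abelianization.lift f with hφ_def
  have hφρ : ∀ x : H, φ (ρ x) = f x := fun x => Abelianization.lift_apply_of f x
  set L : Subgroup G := φ.ker with hL_def
  -- ker φ = image of N
  have hLN : L = N.map ρ := by
    ext g
    constructor
    · intro hg
      obtain ⟨x, rfl⟩ := hρ_surj g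
      have hfx : f x = 1 := by rw [← hφρ x]; exact hg
      have : QuotientGroup.mk' N x ∈ commutator (H ⧸ N) := by
        exact (QuotientGroup.eq_one_iff (QuotientGroup.mk' N x)).mp hfx
      have hcomm : commutator (H ⧸ N) = (commutator H).map (QuotientGroup.mk' N) := by
        rw [commutator_def, commutator_def, Subgroup.map_commutator]
        congr 1 <;>
          exact (Subgroup.map_top_of_surjective _ (QuotientGroup.mk'_surjective N)).symm
      rw [hcomm] at this
      rcases this with ⟨c, hc, hcx⟩
      have hn : x * c⁻¹ ∈ N := by
        rw [← QuotientGroup.ker_mk' N]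
        simp only [MonoidHom.mem_ker, map_mul, map_inv, hcx, mul_inv_cancel]
      refine ⟨x * c⁻¹, hn, ?_⟩
      have : ρ c = 1 := (hρ_ker c).mpr hc
      rw [map_mul, map_inv, this, inv_one, mul_one]
    · rintro ⟨n, hn, rfl⟩
      have : f n = 1 := by
        have hn1 : QuotientGroup.mk' N n = 1 := (QuotientGroup.mk'_apply N n) ▸
          (QuotientGroup.eq_one_iff n).mpr hn
        show Abelianization.of ((QuotientGroup.mk' N) n) = 1
        rw [hn1, map_one]
      simpa [hL_def, MonoidHom.mem_ker, hφρ] using this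
  have hLp : IsPGroup p L := hLN ▸ hN.map ρ
  -- every m-th power lies in L
  have hGm : ∀ g : G, g ^ m ∈ L := by
    intro g
    have : φ (g ^ m) = 1 := by rw [map_pow]; exact pow_card_eq_one'
    exact this
  -- φ is surjective
  have hφ_surj : Function.Surjective φ := by
    intro a
    obtain ⟨q, rfl⟩ : ∃ q : H ⧸ N, Abelianization.of q = a :=
      Quotient.inductionOn' a (fun b => ⟨b, rfl⟩)
    obtain ⟨x, rfl⟩ := QuotientGroup.mk'_surjective N q
    exact ⟨ρ x, hφρ x⟩
  -- Schur–Zassenhaus to get a complement of L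
  have hLindex : L.index = m := by
    rw [hm_def]
    have : Nat.card (G ⧸ L) = Nat.card A :=
      Nat.card_congr (QuotientGroup.quotientKerEquivOfSurjective φ hφ_surj).toEquiv
    rw [← this]; rfl
  haveI : Fact p.Prime := ⟨hp⟩
  obtain ⟨k, hk⟩ := hLp.exists_card_eq
  have hcop : (Nat.card L).Coprime L.index := by
    rw [hk, hLindex]
    exact ((hQ.pow_right k).symm)
  obtain ⟨C, hC⟩ := Subgroup.exists_right_complement'_of_coprime hcop
  -- the canonical subgroup S of m-torsion
  set S : Subgroup G := (powMonoidHom m : G →* G).ker with hS_def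
  have hCS : C = S :=
    aux_compl_eq p m L C hLp hQ
      (fun x hxL hxC => by
        have := hC.disjoint
        exact Subgroup.disjoint_def.mp this hxL hxC)
      hC.sup_eq_top hGm
  -- properties of S as a complement
  have hSd : ∀ x : G, x ∈ L → x ∈ S → x = 1 := by
    rw [← hCS]; exact fun x h1 h2 => Subgroup.disjoint_def.mp hC.disjoint h1 h2
  have hSs : L ⊔ S = ⊤ := hCS ▸ hC.sup_eq_top
  -- the subgroup K
  refine ⟨S.comap ρ, ⟨?_, ?_, ?_⟩, ?_⟩
  · -- commutator ≤ K
    intro x hx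
    have : ρ x = 1 := (hρ_ker x).mpr hx
    show ρ x ∈ S
    rw [this]; exact one_mem S
  · -- surjectivity
    rw [eq_top_iff]
    intro a _
    obtain ⟨g, hgS, hgφ⟩ : ∃ g ∈ S, φ g = a := by
      obtain ⟨g₀, rfl⟩ := hφ_surj a
      have : g₀ ∈ L ⊔ S := hSs ▸ Subgroup.mem_top g₀
      rcases Subgroup.mem_sup.mp this with ⟨l, hl, s, hs, rfl⟩
      exact ⟨s, hs, by rw [map_mul, hl, one_mul]⟩
    obtain ⟨x, rfl⟩ := hρ_surj g
    exact ⟨x, hgS, by rw [← hφρ x]; exact hgφ⟩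
  · -- kernel condition
    intro x hx hfx
    have hφx : ρ x ∈ L := by
      show φ (ρ x) = 1
      rw [hφρ]; exact hfx
    have : ρ x = 1 := hSd _ hφx hx
    exact (hρ_ker x).mp this
  · -- uniqueness
    intro K' ⟨hK1, hK2, hK3⟩
    have hC'd : ∀ x : G, x ∈ L → x ∈ K'.map ρ → x = 1 := by
      rintro x hxL ⟨y, hy, rfl⟩
      have : f y = 1 := by rw [← hφρ]; exact hxL
      exact (hρ_ker y).mpr (hK3 y hy this)
    have hC's : L ⊔ K'.map ρ = ⊤ := by
      rw [eq_top_iff]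
      intro g _
      have : φ g ∈ Subgroup.map f K' := hK2 ▸ Subgroup.mem_top (φ g)
      rcases this with ⟨y, hy, hyg⟩
      refine Subgroup.mem_sup.mpr ⟨g * (ρ y)⁻¹, ?_, ρ y, ⟨y, hy, rfl⟩, by group⟩
      show φ (g * (ρ y)⁻¹) = 1
      rw [map_mul, map_inv, hφρ, hyg, mul_inv_cancel]
    have hC'S : K'.map ρ = S := aux_compl_eq p m L _ hLp hQ hC'd hC's hGm
    have : (K'.map ρ).comap ρ = K' := by
      rw [Subgroup.comap_map_eq]
      refine sup_eq_left.mpr ?_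
      refine le_trans ?_ hK1
      intro x hx
      exact (hρ_ker x).mp hx
    rw [← this, hC'S]
end

section
/- Let Γ be a finite group, L/K a field extension, and V a finite-dimensional K-vector space with a K-linear action of Γ; write End_{K[Γ]}(V) for the K-algebra of K-linear Γ-equivariant endomorphisms of V. Suppose V is completely reducible as a K[Γ]-module, and suppose E ⊆ End_{K[Γ]}(V) is a K-subalgebra containing K·id which is a field of finite dimension over K. If dim_L End_{L[Γ]}(L ⊗_K V) = dim_K E, then End_{K[Γ]}(V) = E and V is an irreducible K[Γ]-module. -/
set_option synthInstance.maxHeartbeats 1000000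
set_option maxHeartbeats 1000000

open scoped TensorProduct


/-- The linear equivalence between matrices and functions on pairs. -/
noncomputable def matUncurry (R β γ : Type*) [CommSemiring R] :
    Matrix β γ R ≃ₗ[R] (β × γ → R) where
  toFun A p := A p.1 p.2
  invFun f := Matrix.of fun b c => f (b, c)
  map_add' _ _ := rfl
  map_smul' _ _ := rfl
  left_inv _ := rfl
  right_inv _ := rfl

/-- Linear independence of vectors over a field is preserved by extension of scalars. -/
theorem aux_pi_indep {K L : Type*} [Field K] [Field L] [Algebra K L]
    {ι α : Type*} [Fintype ι] [Fintype α] [DecidableEq ι] [DecidableEq α]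
    (v : ι → α → K) (hv : LinearIndependent K v) :
    LinearIndependent L (fun i => (algebraMap K L) ∘ v i) := by
  set s := Submodule.span K (Set.range v) with hs
  obtain ⟨t, ht⟩ := Submodule.exists_isCompl s
  let bs : Module.Basis ι K s := Module.Basis.span hv
  let φ : (α → K) →ₗ[K] (ι → K) :=
    (Finsupp.linearEquivFunOnFinite K K ι).toLinearMap ∘ₗ bs.repr.toLinearMap ∘ₗ
      (s.projectionOnto t ht)
  have hφ : ∀ i, φ (v i) = Pi.single i 1 := by
    intro i
    have hmem : v i ∈ s := Submodule.subset_span ⟨i, rfl⟩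
    have h1 : (s.projectionOnto t ht) (v i) = ⟨v i, hmem⟩ := by
      have := Submodule.projectionOnto_apply_left ht ⟨v i, hmem⟩
      simpa using this
    have hb : bs i = ⟨v i, hmem⟩ := (Module.Basis.span_apply hv i)
    have h2 : bs.repr ⟨v i, hmem⟩ = Finsupp.single i 1 := by
      rw [← hb, bs.repr_self]
    show (Finsupp.linearEquivFunOnFinite K K ι) (bs.repr ((s.projectionOnto t ht) (v i)))
      = Pi.single i 1
    rw [h1, h2, Finsupp.linearEquivFunOnFinite_single]
  set P : Matrix ι α K := LinearMap.toMatrix' φ with hPdef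
  have hP : ∀ i, P.mulVec (v i) = Pi.single i 1 := by
    intro i
    have : Matrix.toLin' P (v i) = φ (v i) := by rw [hPdef, Matrix.toLin'_toMatrix']
    rw [← Matrix.toLin'_apply, this, hφ]
  let ψ : (α → L) →ₗ[L] (ι → L) := Matrix.mulVecLin (P.map (algebraMap K L))
  have hψ : ∀ i, ψ ((algebraMap K L) ∘ v i) = Pi.single i 1 := by
    intro i
    funext j
    have : ψ ((algebraMap K L) ∘ v i) j
        = ∑ k, algebraMap K L (P j k) * algebraMap K L (v i k) := by
      simp [ψ, Matrix.mulVecLin_apply, Matrix.mulVec, dotProduct, Function.comp]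
    rw [this]
    have h3 : ∑ k, algebraMap K L (P j k) * algebraMap K L (v i k)
        = algebraMap K L (P.mulVec (v i) j) := by
      rw [Matrix.mulVec, dotProduct, map_sum]
      simp [map_mul]
    rw [h3, hP]
    by_cases h : j = i
    · subst h; simp
    · simp [Pi.single_eq_of_ne h]
  apply LinearIndependent.of_comp ψ
  have : (ψ ∘ fun i => (algebraMap K L) ∘ v i) = fun i => (Pi.single i 1 : ι → L) := by
    funext i; exact hψ i
  rw [this]
  have h4 := (Pi.basisFun L ι).linearIndependent
  have h5 : ⇑(Pi.basisFun L ι) = fun i => (Pi.single i 1 : ι → L) := by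
    funext i; simp
  rwa [h5] at h4

/-- Linear independence of matrices over a field is preserved by extension of scalars. -/
theorem aux_mat_indep {K L : Type*} [Field K] [Field L] [Algebra K L]
    {ι β γ : Type*} [Fintype ι] [Fintype β] [Fintype γ] [DecidableEq ι] [DecidableEq β]
    [DecidableEq γ]
    (v : ι → Matrix β γ K) (hv : LinearIndependent K v) :
    LinearIndependent L (fun i => (v i).map (algebraMap K L)) := by
  have h1 : LinearIndependent K (fun i => (matUncurry K β γ) (v i)) :=
    hv.map' (matUncurry K β γ).toLinearMap (LinearEquiv.ker _)
  have h2 := aux_pi_indep (L := L) _ h1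
  have h3 := h2.map' (matUncurry L β γ).symm.toLinearMap (LinearEquiv.ker _)
  have he : (fun i => (matUncurry L β γ).symm ((algebraMap K L) ∘ (matUncurry K β γ) (v i)))
      = fun i => (v i).map (algebraMap K L) := by
    funext i; rfl
  rw [← he]
  exact h3

/-- If a finite family is independent and lands in a submodule, its cardinality bounds
the finrank of that submodule. -/
theorem card_le_finrank_of_indep_mem {F M : Type*} [Field F] [AddCommGroup M] [Module F M]
    {ι : Type*} [Fintype ι] (p : Submodule F M) [Module.Finite F p]
    (v : ι → M) (hv : LinearIndependent F v) (hmem : ∀ i, v i ∈ p) :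
    Fintype.card ι ≤ Module.finrank F p := by
  let g : ι → p := fun i => ⟨v i, hmem i⟩
  have hg : LinearIndependent F g := by
    apply LinearIndependent.of_comp p.subtype
    exact hv
  exact hg.fintype_card_le_finrank

/-- Suppose `V` is a completely reducible `K[Γ]`-module and
`E ⊆ End_{K[Γ]}(V)` is a `K`-subalgebra (automatically containing `K·id`) which is a field of
finite dimension over `K`.  If `dim_L End_{L[Γ]}(L ⊗_K V) = dim_K E`, then
`End_{K[Γ]}(V) = E` and `V` is an irreducible `K[Γ]`-module.  Here `End_{K[Γ]}(V)` is realized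
as the centralizer of the image of the representation inside `End_K(V)`. -/
theorem statement_14
    (K L : Type*) [Field K] [Field L] [Algebra K L]
    (Γ : Type*) [Group Γ] [Finite Γ]
    (V : Type*) [AddCommGroup V] [Module K V] [FiniteDimensional K V]
    (ρ : Representation K Γ V)
    (hcr : ∀ q : Submodule K V, (∀ g : Γ, ∀ v ∈ q, ρ g v ∈ q) →
      ∃ r : Submodule K V, (∀ g : Γ, ∀ v ∈ r, ρ g v ∈ r) ∧ IsCompl q r)
    (E : Subalgebra K (Module.End K V))
    (hE : E ≤ Subalgebra.centralizer K ((Set.range ⇑ρ) : Set (Module.End K V)))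
    (hEfield : IsField E) (hEfin : Module.Finite K E)
    (hdim : Module.finrank L
        (Subalgebra.centralizer L
          ((Set.range fun g : Γ => LinearMap.baseChange L (ρ g)) :
            Set (Module.End L (L ⊗[K] V)))) =
      Module.finrank K E) :
    E = Subalgebra.centralizer K ((Set.range ⇑ρ) : Set (Module.End K V)) ∧
    ∀ q : Submodule K V, (∀ g : Γ, ∀ v ∈ q, ρ g v ∈ q) → q = ⊥ ∨ q = ⊤ := by
  classical
  set D := Subalgebra.centralizer K ((Set.range ⇑ρ) : Set (Module.End K V)) with hDdef
  set DL := Subalgebra.centralizer L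
      ((Set.range fun g : Γ => LinearMap.baseChange L (ρ g)) :
        Set (Module.End L (L ⊗[K] V))) with hDLdef
  -- the base-change inequality on finranks
  have key : Module.finrank K (Subalgebra.toSubmodule D) ≤
      Module.finrank L (Subalgebra.toSubmodule DL) := by
    let b : Module.Basis (Fin (Module.finrank K V)) K V := Module.finBasis K V
    set m := Module.finrank K (Subalgebra.toSubmodule D) with hm
    let f : Module.Basis (Fin m) K (Subalgebra.toSubmodule D) := Module.finBasis K _
    have hfin : LinearIndependent K (fun i => ((f i : Module.End K V))) :=
      f.linearIndependent.map' (Subalgebra.toSubmodule D).subtype (Submodule.ker_subtype _)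
    set Mmat : Fin m → Matrix (Fin (Module.finrank K V)) (Fin (Module.finrank K V)) K := fun i => LinearMap.toMatrix b b (f i : Module.End K V)
      with hMmat
    have hM : LinearIndependent K Mmat :=
      hfin.map' (LinearMap.toMatrix b b).toLinearMap (LinearEquiv.ker _)
    have hML : LinearIndependent L (fun i => (Mmat i).map (algebraMap K L)) :=
      aux_mat_indep Mmat hM
    set bb : Module.Basis (Fin (Module.finrank K V)) L (L ⊗[K] V) := Algebra.TensorProduct.basis L b with hbb
    haveI : Module.Finite L (L ⊗[K] V) := Module.Finite.base_change K L V
    haveI : Module.Finite L (Module.End L (L ⊗[K] V)) := Module.Finite.linearMap _ _ _ _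
    have hbc : LinearIndependent L
        (fun i => LinearMap.baseChange L (f i : Module.End K V)) := by
      apply LinearIndependent.of_comp (LinearMap.toMatrix bb bb).toLinearMap
      have he : (⇑(LinearMap.toMatrix bb bb).toLinearMap ∘
            fun i => LinearMap.baseChange L (f i : Module.End K V))
          = fun i => (Mmat i).map (algebraMap K L) := by
        funext i
        exact LinearMap.toMatrix_baseChange L (f i : Module.End K V) b b
      rw [he]
      exact hML
    have hmem : ∀ i, LinearMap.baseChange L (f i : Module.End K V) ∈ DL := by
      intro i
      rw [hDLdef, Subalgebra.mem_centralizer_iff]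
      rintro y ⟨γ, rfl⟩
      have hcomm : (ρ γ) * (f i : Module.End K V) = (f i : Module.End K V) * (ρ γ) := by
        have hfi : (f i : Module.End K V) ∈
            Subalgebra.centralizer K ((Set.range ⇑ρ) : Set (Module.End K V)) := (f i).2
        exact (Subalgebra.mem_centralizer_iff K).mp hfi (ρ γ) ⟨γ, rfl⟩
      calc LinearMap.baseChange L (ρ γ) * LinearMap.baseChange L (f i : Module.End K V)
          = LinearMap.baseChange L ((ρ γ) * (f i : Module.End K V)) :=
            (LinearMap.baseChange_mul _ _).symm
        _ = LinearMap.baseChange L ((f i : Module.End K V) * (ρ γ)) := by rw [hcomm]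
        _ = LinearMap.baseChange L (f i : Module.End K V) * LinearMap.baseChange L (ρ γ) :=
            LinearMap.baseChange_mul _ _
    haveI : Module.Finite L (Subalgebra.toSubmodule DL) := inferInstance
    have hcard := card_le_finrank_of_indep_mem (F := L) (M := Module.End L (L ⊗[K] V)) (Subalgebra.toSubmodule DL)
      (fun i => LinearMap.baseChange L (f i : Module.End K V)) hbc (fun i => (Subalgebra.mem_toSubmodule DL).mpr (hmem i))
    simpa using hcard
  -- E = D
  have hED : E = D := by
    have hle : Subalgebra.toSubmodule E ≤ Subalgebra.toSubmodule D := hE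
    have h2 : Module.finrank K (Subalgebra.toSubmodule D)
        ≤ Module.finrank K (Subalgebra.toSubmodule E) := by
      rw [Subalgebra.finrank_toSubmodule, Subalgebra.finrank_toSubmodule]
      calc Module.finrank K D ≤ Module.finrank L DL := by
            rw [← Subalgebra.finrank_toSubmodule, ← Subalgebra.finrank_toSubmodule]; exact key
        _ = Module.finrank K E := hdim
    exact Subalgebra.toSubmodule_injective (Submodule.eq_of_le_of_finrank_le hle h2)
  refine ⟨hED, ?_⟩
  intro q hq
  obtain ⟨r, hr, hco⟩ := hcr q hq
  set π := q.projectionOnto r hco with hπ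
  set p : Module.End K V := q.subtype ∘ₗ π with hp
  have hpq : ∀ x ∈ q, p x = x := by
    intro x hx
    have := Submodule.projectionOnto_apply_left hco ⟨x, hx⟩
    show q.subtype (π x) = x
    rw [show π x = (⟨x, hx⟩ : q) from this]
    rfl
  have hpr : ∀ x ∈ r, p x = 0 := by
    intro x hx
    have := Submodule.projectionOnto_apply_of_mem_right hco hx
    show q.subtype (π x) = 0
    rw [this]; rfl
  have hprange : ∀ x, p x ∈ q := fun x => (π x).2
  have hpmem : p ∈ D := by
    rw [hDdef, Subalgebra.mem_centralizer_iff]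
    rintro y ⟨γ, rfl⟩
    apply LinearMap.ext
    intro v
    obtain ⟨x, y', hx, hy', hv⟩ := Submodule.codisjoint_iff_exists_add_eq.mp hco.codisjoint v
    have h1 : p v = x := by
      rw [← hv, map_add, hpq x hx, hpr y' hy', add_zero]
    have h2 : p (ρ γ v) = ρ γ x := by
      rw [← hv, map_add, map_add, hpq _ (hq γ x hx), hpr _ (hr γ y' hy'), add_zero]
    show ρ γ (p v) = p (ρ γ v)
    rw [h1, h2]
  have hpE : p ∈ E := by rw [hED]; exact hpmem
  letI : Field E := hEfield.toField
  set e : E := ⟨p, hpE⟩ with he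
  have hee : e * e = e := by
    apply Subtype.ext
    show p * p = p
    apply LinearMap.ext
    intro v
    show p (p v) = p v
    exact hpq _ (hprange v)
  have h0 : e * (e - 1) = 0 := by rw [mul_sub, mul_one, hee, sub_self]
  rcases mul_eq_zero.mp h0 with h | h
  · left
    have hp0 : p = 0 := congrArg Subtype.val h
    rw [eq_bot_iff]
    intro v hv
    have : p v = v := hpq v hv
    rw [hp0] at this
    simp only [LinearMap.zero_apply] at this
    simpa using this.symm
  · right
    have he1 : e = 1 := sub_eq_zero.mp h
    have hp1 : p = 1 := congrArg Subtype.val he1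
    rw [eq_top_iff]
    intro v _
    have : p v = v := by rw [hp1]; rfl
    exact this ▸ hprange v
end

section
/- Let n ≥ 2 with p not dividing n, and assume (n, |F|) ∉ {(2,2), (2,3)}. Consider sl_n(F) with the conjugation action of SL_n(F). Then: (i) the only additive subgroups of sl_n(F) stable under X ↦ gXg⁻¹ for all g ∈ SL_n(F) are 0 and sl_n(F) (i.e. sl_n(F) is irreducible as an F_p[SL_n(F)]-module); and (ii) every additive map φ : sl_n(F) → sl_n(F) satisfying φ(gXg⁻¹) = gφ(X)g⁻¹ for all g ∈ SL_n(F) and X ∈ sl_n(F) is multiplication by a scalar: there is c ∈ F with φ(X) = cX for all X. -/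
open Matrix

namespace S15

variable {F : Type*} [Field F] {n : ℕ}

local notation "M[" n "," F "]" => Matrix (Fin n) (Fin n) F

lemma mul3 (i j k l : Fin n) (c d : F) (M : M[n,F]) :
    Matrix.single i j c * M * Matrix.single k l d = Matrix.single i l (c * M j k * d) := by
  ext a b
  by_cases hb : b = l
  · subst hb
    rw [mul_single_apply_same]
    by_cases ha : a = i
    · subst ha
      rw [single_mul_apply_same, single_apply_same]
    · rw [single_mul_apply_of_ne _ _ _ _ _ ha,
        single_apply_of_row_ne (fun h => ha h.symm), zero_mul]
  · rw [mul_single_apply_of_ne _ _ _ _ _ hb,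
      single_apply_of_col_ne _ _ (fun h => hb h.symm)]

lemma mul_left_eq (i j : Fin n) (c : F) (M : M[n,F]) (hd : ∀ a b, a ≠ b → M a b = 0) :
    Matrix.single i j c * M = Matrix.single i j (c * M j j) := by
  ext a b
  by_cases ha : a = i
  · subst ha
    rw [single_mul_apply_same]
    by_cases hbj : b = j
    · subst hbj; rw [single_apply_same]
    · rw [single_apply_of_col_ne _ _ (fun h => hbj h.symm), hd j b (fun h => hbj h.symm),
        mul_zero]
  · rw [single_mul_apply_of_ne _ _ _ _ _ ha,
      single_apply_of_row_ne (fun h => ha h.symm)]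

lemma mul_right_eq (i j : Fin n) (c : F) (M : M[n,F]) (hd : ∀ a b, a ≠ b → M a b = 0) :
    M * Matrix.single i j c = Matrix.single i j (M i i * c) := by
  ext a b
  by_cases hb : b = j
  · subst hb
    rw [mul_single_apply_same]
    by_cases ha : a = i
    · subst ha; rw [single_apply_same]
    · rw [single_apply_of_row_ne (fun h => ha h.symm), hd a i (fun h => ha h),
        zero_mul]
  · rw [mul_single_apply_of_ne _ _ _ _ _ hb,
      single_apply_of_col_ne _ _ (fun h => hb h.symm)]

lemma coe_inv_eq {g : SpecialLinearGroup (Fin n) F} {B : M[n,F]}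
    (h1 : (g : M[n,F]) * B = 1) : ((g⁻¹ : SpecialLinearGroup (Fin n) F) : M[n,F]) = B := by
  calc ((g⁻¹ : SpecialLinearGroup (Fin n) F) : M[n,F])
      = ((g⁻¹ : SpecialLinearGroup (Fin n) F) : M[n,F]) * ((g : M[n,F]) * B) := by
        rw [h1, mul_one]
    _ = (((g⁻¹ * g : SpecialLinearGroup (Fin n) F)) : M[n,F]) * B := by
        rw [← mul_assoc]; rfl
    _ = B := by rw [inv_mul_cancel]; simp

lemma stdBasisMatrix_neg (i j : Fin n) (c : F) :
    Matrix.single i j (-c) = -Matrix.single i j c := by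
  rw [show (-c) = (-1 : F) • c by simp, ← smul_single, neg_one_smul]

lemma conj_tv {i j : Fin n} (hij : i ≠ j) (c : F) (M : M[n,F]) :
    transvection i j c * M * transvection i j (-c)
      = M + (Matrix.single i j c * M - M * Matrix.single i j c
          - Matrix.single i j (c * M j i * c)) := by
  have h3 := mul3 i j i j c c M
  simp only [Matrix.transvection, stdBasisMatrix_neg, add_mul, one_mul, mul_add, mul_one,
    mul_neg, h3]
  abel

variable {N : AddSubgroup (M[n,F])}

lemma L1 (hstab : ∀ (g : SpecialLinearGroup (Fin n) F), ∀ X ∈ N,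
      (g : M[n,F]) * X * ((g⁻¹ : SpecialLinearGroup (Fin n) F) : M[n,F]) ∈ N)
    {X : M[n,F]} (hX : X ∈ N) {i j : Fin n} (hij : i ≠ j) (c : F) :
    Matrix.single i j c * X - X * Matrix.single i j c
      - Matrix.single i j (c * X j i * c) ∈ N := by
  set g : SpecialLinearGroup (Fin n) F :=
    ⟨transvection i j c, det_transvection_of_ne i j hij c⟩ with hg
  have hinv : ((g⁻¹ : SpecialLinearGroup (Fin n) F) : M[n,F]) = transvection i j (-c) := by
    apply coe_inv_eq
    show transvection i j c * transvection i j (-c) = 1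
    rw [transvection_mul_transvection_same _ _ hij, add_neg_cancel]
    simp [Matrix.transvection]
  have h := hstab g X hX
  rw [hinv] at h
  have hgc : (g : M[n,F]) = transvection i j c := rfl
  rw [hgc, conj_tv hij] at h
  have h2 := N.sub_mem h hX
  rwa [add_sub_cancel_left] at h2
lemma Z_entry {i j : Fin n} (hij : i ≠ j) {k : Fin n} (hki : k ≠ i) (d e : F) (X : M[n,F]) :
    (Matrix.single i j d * X - X * Matrix.single i j d - Matrix.single i j e) k i = 0 := by
  simp only [Matrix.sub_apply]
  rw [single_mul_apply_of_ne _ _ _ _ _ hki,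
    mul_single_apply_of_ne _ _ _ _ _ hij,
    single_apply_of_row_ne (fun h => hki h.symm)]
  ring

lemma key {i j : Fin n} (hij : i ≠ j) {k : Fin n} (hki : k ≠ i) (c d e : F) (X : M[n,F]) :
    Matrix.single i k c * (Matrix.single i j d * X - X * Matrix.single i j d - Matrix.single i j e)
      - (Matrix.single i j d * X - X * Matrix.single i j d - Matrix.single i j e) * Matrix.single i k c
      - Matrix.single i k (c * ((Matrix.single i j d * X - X * Matrix.single i j d - Matrix.single i j e) k i) * c)
    = -(Matrix.single i j (c * X k i * d) + Matrix.single i k (d * X j i * c)) := by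
  rw [Z_entry hij hki]
  have e1 : Matrix.single i k c * (Matrix.single i j d * X) = 0 := by
    rw [← mul_assoc, single_mul_single_of_ne _ _ _ _ hki, zero_mul]
  have e2 : Matrix.single i k c * (X * Matrix.single i j d) = Matrix.single i j (c * X k i * d) := by
    rw [← mul_assoc, mul3]
  have e3 : Matrix.single i k c * Matrix.single i j e = 0 :=
    single_mul_single_of_ne _ _ _ _ hki _
  have e4 : Matrix.single i j d * X * Matrix.single i k c = Matrix.single i k (d * X j i * c) :=
    mul3 _ _ _ _ _ _ _
  have e5 : X * Matrix.single i j d * Matrix.single i k c = 0 := by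
    rw [mul_assoc, single_mul_single_of_ne _ _ _ _ (fun h => hij h.symm), mul_zero]
  have e6 : Matrix.single i j e * Matrix.single i k c = 0 :=
    single_mul_single_of_ne _ _ _ _ (fun h => hij h.symm) _
  rw [mul_sub, mul_sub, sub_mul, sub_mul, e1, e2, e3, e4, e5, e6]
  rw [mul_zero, zero_mul, Matrix.single_zero]
  abel

lemma L2 (hstab : ∀ (g : SpecialLinearGroup (Fin n) F), ∀ X ∈ N,
      (g : M[n,F]) * X * ((g⁻¹ : SpecialLinearGroup (Fin n) F) : M[n,F]) ∈ N)
    {X : M[n,F]} (hX : X ∈ N) {i j k : Fin n} (hij : i ≠ j) (hik : i ≠ k) (c : F) :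
    Matrix.single i j (c * X k i * 1) + Matrix.single i k (1 * X j i * c) ∈ N := by
  have hZ := L1 hstab hX hij 1
  have hW := L1 hstab hZ hik c
  rw [key hij (fun h => hik h.symm)] at hW
  simpa using N.neg_mem hW

lemma L2' (hstab : ∀ (g : SpecialLinearGroup (Fin n) F), ∀ X ∈ N,
      (g : M[n,F]) * X * ((g⁻¹ : SpecialLinearGroup (Fin n) F) : M[n,F]) ∈ N)
    {X : M[n,F]} (hX : X ∈ N) {i j k : Fin n} (hij : i ≠ j) (hik : i ≠ k) (hjk : j ≠ k) (c : F) :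
    Matrix.single k j (c * X j i) ∈ N := by
  have hV := L2 hstab hX hij hik 1
  have hW := L2 hstab hV (hjk.symm) (hik.symm) c
  have hvik : (Matrix.single i j (1 * X k i * 1) + Matrix.single i k (1 * X j i * 1)) i k
      = X j i := by
    simp only [Matrix.add_apply, one_mul, mul_one]
    rw [single_apply_of_col_ne _ _ (fun h => hjk h), single_apply_same, zero_add]
  have hvjk : (Matrix.single i j (1 * X k i * 1) + Matrix.single i k (1 * X j i * 1)) j k
      = 0 := by
    simp only [Matrix.add_apply]
    rw [single_apply_of_row_ne hij, single_apply_of_row_ne hij, add_zero]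
  rw [hvik, hvjk] at hW
  simpa using hW

lemma L3 (hstab : ∀ (g : SpecialLinearGroup (Fin n) F), ∀ X ∈ N,
      (g : M[n,F]) * X * ((g⁻¹ : SpecialLinearGroup (Fin n) F) : M[n,F]) ∈ N)
    {X : M[n,F]} (hX : X ∈ N) {i j : Fin n} (hij : i ≠ j) (c : F) :
    Matrix.single i j (c * X j i + X j i * c) ∈ N := by
  have hZ := L1 hstab hX hij 1
  have hW := L1 hstab hZ hij c
  rw [key hij (fun h => hij h.symm)] at hW
  have := N.neg_mem hW
  rw [neg_neg] at this
  rw [show c * X j i + X j i * c = (c * X j i * 1) + (1 * X j i * c) by ring,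
    Matrix.single_add]
  exact this
section L4
variable (hstab : ∀ (g : SpecialLinearGroup (Fin n) F), ∀ X ∈ N,
      (g : M[n,F]) * X * ((g⁻¹ : SpecialLinearGroup (Fin n) F) : M[n,F]) ∈ N)
variable {u v : Fin n} (huv : u ≠ v) (hE : ∀ c : F, Matrix.single u v c ∈ N)

include hstab huv hE

lemma hD : ∀ s c : F, Matrix.single v v (s * c) - Matrix.single u u (c * s)
    - Matrix.single v u (s * c * s) ∈ N := by
  intro s c
  have h := L1 hstab (hE c) huv.symm s
  rw [single_mul_single_same, single_mul_single_same, single_apply_same] at h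
  exact h

lemma L4b : ∀ c : F, Matrix.single v v c - Matrix.single u u c ∈ N := by
  intro c
  have hD1 := hD hstab huv hE 1 1
  have hW := L1 hstab hD1 huv c
  set D : M[n,F] := Matrix.single v v (1 * 1) - Matrix.single u u (1 * 1)
    - Matrix.single v u (1 * 1 * 1) with hDdef
  have hDvu : D v u = -1 := by
    rw [hDdef]
    simp only [Matrix.sub_apply]
    rw [single_apply_of_col_ne _ _ (fun h => huv h.symm),
      single_apply_of_row_ne huv, single_apply_same]
    ring
  have hmul1 : Matrix.single u v c * D = Matrix.single u v c - Matrix.single u u c := by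
    rw [hDdef, mul_sub, mul_sub, single_mul_single_same, single_mul_single_of_ne _ _ _ _ huv.symm,
      single_mul_single_same]
    simp
  have hmul2 : D * Matrix.single u v c = - Matrix.single u v c - Matrix.single v v c := by
    rw [hDdef, sub_mul, sub_mul, single_mul_single_of_ne _ _ _ _ huv.symm,
      single_mul_single_same, single_mul_single_same]
    simp
  rw [hmul1, hmul2, hDvu] at hW
  have hco : Matrix.single u v (c * (-1) * c) = - Matrix.single u v (c * c) := by
    rw [show c * (-1) * c = -(c * c) by ring, stdBasisMatrix_neg]
  rw [hco] at hW
  have hmem := N.sub_mem (N.sub_mem (N.sub_mem hW (hE c)) (hE c)) (hE (c * c))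
  have : Matrix.single u v c - Matrix.single u u c - (-Matrix.single u v c - Matrix.single v v c)
      - -Matrix.single u v (c * c) - Matrix.single u v c - Matrix.single u v c
      - Matrix.single u v (c * c)
      = Matrix.single v v c - Matrix.single u u c := by abel
  rwa [this] at hmem

lemma L4a : ∀ c : F, Matrix.single v u c ∈ N := by
  intro c
  have h1 := hD hstab huv hE 1 c
  have h2 := L4b hstab huv hE (1 * c)
  have := N.sub_mem h2 h1
  have heq : Matrix.single v v (1 * c) - Matrix.single u u (1 * c)
      - (Matrix.single v v (1 * c) - Matrix.single u u (c * 1) - Matrix.single v u (1 * c * 1))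
      = Matrix.single v u c := by
    simp only [one_mul, mul_one]
    abel
  rw [heq] at this
  exact this

end L4
lemma stdBasisMatrix_sub (i j : Fin n) (c d : F) :
    Matrix.single i j (c - d) = Matrix.single i j c - Matrix.single i j d := by
  rw [sub_eq_add_neg, Matrix.single_add, stdBasisMatrix_neg, sub_eq_add_neg]

section L5

variable (hstab : ∀ (g : SpecialLinearGroup (Fin n) F), ∀ X ∈ N,
      (g : M[n,F]) * X * ((g⁻¹ : SpecialLinearGroup (Fin n) F) : M[n,F]) ∈ N)

include hstab

lemma move {x y k : Fin n} (hxy : x ≠ y) (hkx : k ≠ x) (hky : k ≠ y)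
    (h : ∀ c : F, Matrix.single x y c ∈ N) : ∀ c : F, Matrix.single k x c ∈ N := by
  intro c
  have := L2' hstab (h 1) hxy.symm hky.symm hkx.symm c
  rwa [single_apply_same, mul_one] at this

lemma L5 {u v : Fin n} (huv : u ≠ v) (hE : ∀ c : F, Matrix.single u v c ∈ N) :
    ∀ a b : Fin n, a ≠ b → ∀ c : F, Matrix.single a b c ∈ N := by
  intro a b hab
  by_cases hau : a = u
  · subst hau
    by_cases hbv : b = v
    · subst hbv; exact hE
    · exact L4a hstab (Ne.symm hab) (move hstab huv (Ne.symm hab) hbv hE)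
  · by_cases hav : a = v
    · subst hav
      by_cases hbu : b = u
      · subst hbu; exact L4a hstab (Ne.symm hab) hE
      · exact L4a hstab (Ne.symm hab)
          (move hstab huv.symm (Ne.symm hab) hbu (L4a hstab huv hE))
    · by_cases hbu : b = u
      · subst hbu; exact move hstab huv hau hav hE
      · by_cases hbv : b = v
        · subst hbv; exact move hstab huv.symm hav hau (L4a hstab huv hE)
        · exact move hstab hbu hab hau (move hstab huv hbu hbv hE)

lemma L5diag {u v : Fin n} (huv : u ≠ v) (hE : ∀ c : F, Matrix.single u v c ∈ N) :
    ∀ a b : Fin n, a ≠ b → ∀ c : F, Matrix.single b b c - Matrix.single a a c ∈ N :=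
  fun a b hab => L4b hstab hab (L5 hstab huv hE a b hab)

lemma L6 (hn : 2 ≤ n) (hnF : (n : F) ≠ 0)
    {X : M[n,F]} (hX : X ∈ N) (hX0 : X ≠ 0) (htr : Matrix.trace X = 0) :
    ∃ u v : Fin n, u ≠ v ∧ ∀ c : F, Matrix.single u v c ∈ N := by
  by_cases hoff : ∃ a b : Fin n, a ≠ b ∧ X a b ≠ 0
  · obtain ⟨a, b, hab, hXab⟩ := hoff
    by_cases h3 : ∃ k : Fin n, k ≠ a ∧ k ≠ b
    · obtain ⟨k, hka, hkb⟩ := h3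
      refine ⟨k, a, hka, fun d => ?_⟩
      have := L2' hstab hX (Ne.symm hab) (Ne.symm hkb) (Ne.symm hka) (d * (X a b)⁻¹)
      rwa [mul_assoc, inv_mul_cancel₀ hXab, mul_one] at this
    · -- n = 2, so char F ≠ 2
      push_neg at h3
      have h2F : (2 : F) ≠ 0 := by
        have hcard : (Finset.univ : Finset (Fin n)) ⊆ {a, b} := by
          intro k _
          simp only [Finset.mem_insert, Finset.mem_singleton]
          by_cases h : k = a
          · exact Or.inl h
          · exact Or.inr (h3 k h)
        have hle : n ≤ 2 := by
          have h1 := Finset.card_le_card hcard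
          rw [Finset.card_univ, Fintype.card_fin] at h1
          exact h1.trans ((Finset.card_insert_le a {b}).trans (by simp))
        have hn2 : n = 2 := le_antisymm hle hn
        rw [hn2] at hnF
        exact_mod_cast hnF

      have h2Xab : (2 : F) * X a b ≠ 0 := mul_ne_zero h2F hXab
      refine ⟨b, a, Ne.symm hab, fun d => ?_⟩
      have := L3 hstab hX (Ne.symm hab) (d * ((2 : F) * X a b)⁻¹)
      rw [show d * ((2 : F) * X a b)⁻¹ * X a b + X a b * (d * ((2 : F) * X a b)⁻¹)
          = d * (((2 : F) * X a b)⁻¹ * ((2 : F) * X a b)) by ring,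
        inv_mul_cancel₀ h2Xab, mul_one] at this
      exact this
  · push_neg at hoff
    have hdiag : ∀ a b : Fin n, a ≠ b → X a b = 0 := hoff
    have hne : ∃ i j : Fin n, X i i ≠ X j j := by
      by_contra h
      push_neg at h
      set i0 : Fin n := ⟨0, by omega⟩ with hi0
      have htreq : Matrix.trace X = (n : F) * X i0 i0 := by
        have : Matrix.trace X = ∑ a : Fin n, X a a := rfl
        rw [this]
        rw [Finset.sum_congr rfl (fun a _ => h a i0), Finset.sum_const]
        simp [mul_comm]
      have hX00 : X i0 i0 = 0 := by
        rw [htreq] at htr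
        exact (mul_eq_zero.mp htr).resolve_left hnF
      apply hX0
      ext a b
      by_cases hab : a = b
      · subst hab
        rw [h a i0, hX00]; rfl
      · rw [hdiag a b hab]; rfl
    obtain ⟨i, j, hne⟩ := hne
    have hij : i ≠ j := fun h => hne (by rw [h])
    have hsub : X j j - X i i ≠ 0 := sub_ne_zero.mpr (Ne.symm hne)
    refine ⟨i, j, hij, fun d => ?_⟩
    have hL := L1 hstab hX hij (d * (X j j - X i i)⁻¹)
    rw [hdiag j i hij.symm] at hL
    rw [mul_left_eq i j _ X hdiag, mul_right_eq i j _ X hdiag] at hL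
    rw [show d * (X j j - X i i)⁻¹ * 0 * (d * (X j j - X i i)⁻¹) = 0 by ring,
      Matrix.single_zero, sub_zero, ← stdBasisMatrix_sub] at hL
    rw [show d * (X j j - X i i)⁻¹ * X j j - X i i * (d * (X j j - X i i)⁻¹)
        = d * ((X j j - X i i)⁻¹ * (X j j - X i i)) by ring,
      inv_mul_cancel₀ hsub, mul_one] at hL
    exact hL

end L5

lemma stdBasisMatrix_sum (i j : Fin n) (f : Fin n → F) :
    Matrix.single i j (∑ a, f a) = ∑ a, Matrix.single i j (f a) := by
  ext a' b'
  rw [Matrix.sum_apply]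
  by_cases h : i = a' ∧ j = b'
  · obtain ⟨h1, h2⟩ := h
    subst h1; subst h2
    simp only [single_apply_same]
  · rw [single_apply_of_ne _ _ _ _ _ h]
    exact (Finset.sum_eq_zero (fun a _ => single_apply_of_ne _ _ _ _ _ h)).symm

lemma part1 (hn : 2 ≤ n) (hnF : (n : F) ≠ 0)
    (N : AddSubgroup (M[n,F]))
    (htr : ∀ X ∈ N, Matrix.trace X = 0)
    (hstab : ∀ (g : SpecialLinearGroup (Fin n) F), ∀ X ∈ N,
      (g : M[n,F]) * X * ((g⁻¹ : SpecialLinearGroup (Fin n) F) : M[n,F]) ∈ N) :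
    N = ⊥ ∨ (∀ X : M[n,F], X ∈ N ↔ Matrix.trace X = 0) := by
  by_cases hbot : N = ⊥
  · exact Or.inl hbot
  · right
    intro X
    refine ⟨htr X, fun hXtr => ?_⟩
    obtain ⟨Y, hY, hY0⟩ : ∃ Y ∈ N, Y ≠ 0 := by
      by_contra h
      push_neg at h
      exact hbot ((AddSubgroup.eq_bot_iff_forall N).mpr h)
    obtain ⟨u, v, huv, hE⟩ := L6 hstab hn hnF hY hY0 (htr Y hY)
    have hall := L5 hstab huv hE
    have hdg := L5diag hstab huv hE
    set i0 : Fin n := ⟨0, by omega⟩ with hi0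
    have key : X = ∑ a : Fin n, ∑ b : Fin n,
        (if a = b then Matrix.single a a (X a a) - Matrix.single i0 i0 (X a a)
         else Matrix.single a b (X a b)) := by
      have e1 : ∀ a b : Fin n,
          (if a = b then Matrix.single a a (X a a) - Matrix.single i0 i0 (X a a)
           else Matrix.single a b (X a b))
          = Matrix.single a b (X a b)
            - (if a = b then Matrix.single i0 i0 (X a a) else 0) := by
        intro a b
        by_cases h : a = b
        · subst h; simp
        · simp [h]
      simp_rw [e1, Finset.sum_sub_distrib, Finset.sum_ite_eq, Finset.mem_univ, if_true,
        ← matrix_eq_sum_single]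
      have : ∑ a : Fin n, Matrix.single i0 i0 (X a a) = Matrix.single i0 i0 (Matrix.trace X) := by
        rw [show Matrix.trace X = ∑ a : Fin n, X a a from rfl, stdBasisMatrix_sum]
      rw [this, hXtr, Matrix.single_zero, sub_zero]
    rw [key]
    refine AddSubgroup.sum_mem N (fun a _ => AddSubgroup.sum_mem N (fun b _ => ?_))
    by_cases hab : a = b
    · subst hab
      rw [if_pos rfl]
      by_cases hai : a = i0
      · subst hai; rw [sub_self]; exact N.zero_mem
      · exact hdg i0 a (fun h => hai h.symm) (X a a)
    · rw [if_neg hab]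
      exact hall a b hab (X a b)

lemma tv_inv_coe {i j : Fin n} (hij : i ≠ j) (c : F) :
    (((⟨transvection i j c, det_transvection_of_ne i j hij c⟩ :
        SpecialLinearGroup (Fin n) F)⁻¹ : SpecialLinearGroup (Fin n) F) : M[n,F])
      = transvection i j (-c) := by
  apply coe_inv_eq
  show transvection i j c * transvection i j (-c) = 1
  rw [transvection_mul_transvection_same _ _ hij, add_neg_cancel]
  simp [Matrix.transvection]

lemma diag_mul_std_mul_diag (f g : Fin n → F) (i j : Fin n) (a : F) :
    Matrix.diagonal f * Matrix.single i j a * Matrix.diagonal g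
      = Matrix.single i j (f i * a * g j) := by
  ext a' b'
  rw [Matrix.mul_diagonal, Matrix.diagonal_mul]
  by_cases h : i = a' ∧ j = b'
  · obtain ⟨h1, h2⟩ := h; subst h1; subst h2
    rw [single_apply_same, single_apply_same]
  · rw [single_apply_of_ne _ _ _ _ _ h, single_apply_of_ne _ _ _ _ _ h,
      mul_zero, zero_mul]

lemma fixY (hnF : (n : F) ≠ 0) {i0 i1 : Fin n} (h01 : i0 ≠ i1)
    (Y : M[n,F]) (htr : Matrix.trace Y = 0)
    (H1 : ∀ j : Fin n, j ≠ i0 →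
      Matrix.single i0 j 1 * Y - Y * Matrix.single i0 j 1
        - Matrix.single i0 j (1 * Y j i0 * 1) = 0)
    (H2 : ∀ i : Fin n, i ≠ i1 →
      Matrix.single i i1 1 * Y - Y * Matrix.single i i1 1
        - Matrix.single i i1 (1 * Y i1 i * 1) = 0) :
    Y = Matrix.single i0 i1 (Y i0 i1) := by
  have entry : ∀ (j : Fin n), j ≠ i0 → ∀ a b : Fin n,
      (Matrix.single i0 j (1:F) * Y) a b - (Y * Matrix.single i0 j (1:F)) a b
        - Matrix.single i0 j ((1:F) * Y j i0 * 1) a b = 0 := by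
    intro j hj a b
    have h := congrArg (fun M => M a b) (H1 j hj)
    simp only [Matrix.sub_apply, Matrix.zero_apply] at h
    exact h
  have fact2 : ∀ j : Fin n, j ≠ i0 → ∀ b : Fin n, b ≠ j → Y j b = 0 := by
    intro j hj b hb
    have h := entry j hj i0 b
    rw [single_mul_apply_same,
      mul_single_apply_of_ne _ _ _ _ _ hb,
      single_apply_of_col_ne _ _ (Ne.symm hb)] at h
    simpa using h
  have fact3 : ∀ j : Fin n, j ≠ i0 → Y j j = Y i0 i0 := by
    intro j hj
    have h := entry j hj i0 j
    rw [single_mul_apply_same, mul_single_apply_same,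
      single_apply_same, fact2 j hj i0 (Ne.symm hj)] at h
    simp only [one_mul, mul_one, mul_zero, zero_mul, sub_zero] at h
    exact sub_eq_zero.mp h
  have fact4 : ∀ i : Fin n, i ≠ i0 → i ≠ i1 → Y i0 i = 0 := by
    intro i hi0 hi1
    have h := congrArg (fun M => M i0 i1) (H2 i hi1)
    simp only [Matrix.sub_apply, Matrix.zero_apply] at h
    rw [single_mul_apply_of_ne _ _ _ _ _ (Ne.symm hi0),
      mul_single_apply_same,
      single_apply_of_row_ne hi0] at h
    simpa using h
  have fact5 : Y i0 i0 = 0 := by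
    have htreq : Matrix.trace Y = (n : F) * Y i0 i0 := by
      rw [show Matrix.trace Y = ∑ a : Fin n, Y a a from rfl]
      have hcong : ∑ a : Fin n, Y a a = ∑ _a : Fin n, Y i0 i0 :=
        Finset.sum_congr rfl (fun a _ => by
          by_cases ha : a = i0
          · rw [ha]
          · exact fact3 a ha)
      rw [hcong, Finset.sum_const]
      simp [mul_comm]
    rw [htreq] at htr
    exact (mul_eq_zero.mp htr).resolve_left hnF
  ext a b
  by_cases ha : a = i0
  · by_cases hb : b = i1
    · rw [ha, hb, single_apply_same]
    · rw [single_apply_of_col_ne _ _ (Ne.symm hb), ha]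
      by_cases hb0 : b = i0
      · rw [hb0]; exact fact5
      · exact fact4 b hb0 hb
  · rw [single_apply_of_row_ne (Ne.symm ha)]
    by_cases hb : b = a
    · rw [hb, fact3 a ha, fact5]
    · exact fact2 a ha b hb

lemma part2 [Fintype F] (hn : 2 ≤ n) (hnF : (n : F) ≠ 0)
    (φ : (LinearMap.ker (Matrix.traceLinearMap (Fin n) F F)) →+
        (LinearMap.ker (Matrix.traceLinearMap (Fin n) F F)))
    (hequiv : ∀ (g : SpecialLinearGroup (Fin n) F)
        (X Y : LinearMap.ker (Matrix.traceLinearMap (Fin n) F F)),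
      (Y : M[n,F]) = (g : M[n,F]) * (X : M[n,F]) *
          ((g⁻¹ : SpecialLinearGroup (Fin n) F) : M[n,F]) →
      (φ Y : M[n,F]) = (g : M[n,F]) * (φ X : M[n,F]) *
          ((g⁻¹ : SpecialLinearGroup (Fin n) F) : M[n,F])) :
    ∃ c : F, ∀ X : LinearMap.ker (Matrix.traceLinearMap (Fin n) F F),
      (φ X : M[n,F]) = c • (X : M[n,F]) := by
  let K := LinearMap.ker (Matrix.traceLinearMap (Fin n) F F)
  have h0n : 0 < n := by omega
  have h1n : 1 < n := by omega
  set i0 : Fin n := ⟨0, h0n⟩ with hi0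
  set i1 : Fin n := ⟨1, h1n⟩ with hi1
  have h01 : i0 ≠ i1 := by
    intro h
    have := congrArg Fin.val h
    simp [hi0, hi1] at this
  have htrE : ∀ a : F, Matrix.single i0 i1 a ∈ K := fun a =>
    LinearMap.mem_ker.mpr (Matrix.trace_single_eq_of_ne i0 i1 a h01)
  set x : F → K := fun a => ⟨Matrix.single i0 i1 a, htrE a⟩ with hxdef
  -- Step A : φ (x a) is supported at (i0, i1)
  have hA : ∀ a : F, (φ (x a) : M[n,F]) = Matrix.single i0 i1 ((φ (x a) : M[n,F]) i0 i1) := by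
    intro a
    apply fixY hnF h01 _ (LinearMap.mem_ker.mp (φ (x a)).2)
    · intro j hj
      set g : SpecialLinearGroup (Fin n) F :=
        ⟨transvection i0 j 1, det_transvection_of_ne i0 j (Ne.symm hj) 1⟩ with hg
      have hfix : ((x a : K) : M[n,F]) = (g : M[n,F]) * ((x a : K) : M[n,F]) *
          ((g⁻¹ : SpecialLinearGroup (Fin n) F) : M[n,F]) := by
        rw [tv_inv_coe (Ne.symm hj) 1,
          show (g : M[n,F]) = transvection i0 j 1 from rfl, conj_tv (Ne.symm hj) 1,
          show ((x a : K) : M[n,F]) = Matrix.single i0 i1 a from rfl]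
        rw [single_mul_single_of_ne _ _ _ _ hj, single_mul_single_of_ne _ _ _ _ (Ne.symm h01),
          single_apply_of_row_ne (Ne.symm hj)]
        simp
      have h := hequiv g (x a) (x a) hfix
      rw [tv_inv_coe (Ne.symm hj) 1, show (g : M[n,F]) = transvection i0 j 1 from rfl,
        conj_tv (Ne.symm hj) 1] at h
      exact left_eq_add.mp h
    · intro i hi
      set g : SpecialLinearGroup (Fin n) F :=
        ⟨transvection i i1 1, det_transvection_of_ne i i1 hi 1⟩ with hg
      have hfix : ((x a : K) : M[n,F]) = (g : M[n,F]) * ((x a : K) : M[n,F]) *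
          ((g⁻¹ : SpecialLinearGroup (Fin n) F) : M[n,F]) := by
        rw [tv_inv_coe hi 1,
          show (g : M[n,F]) = transvection i i1 1 from rfl, conj_tv hi 1,
          show ((x a : K) : M[n,F]) = Matrix.single i0 i1 a from rfl]
        rw [single_mul_single_of_ne _ _ _ _ (Ne.symm h01), single_mul_single_of_ne _ _ _ _ (Ne.symm hi),
          single_apply_of_row_ne h01]
        simp
      have h := hequiv g (x a) (x a) hfix
      rw [tv_inv_coe hi 1, show (g : M[n,F]) = transvection i i1 1 from rfl,
        conj_tv hi 1] at h
      exact left_eq_add.mp h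
  set ψ : F → F := fun a => (φ (x a) : M[n,F]) i0 i1 with hψ
  have hψ0 : ψ 0 = 0 := by
    have hx0 : x 0 = 0 := Subtype.ext (by
      show Matrix.single i0 i1 (0 : F) = 0; simp)
    show (φ (x 0) : M[n,F]) i0 i1 = 0
    rw [hx0, map_zero]
    simp
  have hψadd : ∀ a b : F, ψ (a + b) = ψ a + ψ b := by
    intro a b
    have hxab : x (a + b) = x a + x b := Subtype.ext (by
      show Matrix.single i0 i1 (a + b)
        = Matrix.single i0 i1 a + Matrix.single i0 i1 b
      exact Matrix.single_add _ _ _ _)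
    show (φ (x (a+b)) : M[n,F]) i0 i1 = _
    rw [hxab, map_add]
    rfl
  have hψsub : ∀ a b : F, ψ (a - b) = ψ a - ψ b := by
    intro a b
    have h := hψadd (a - b) b
    rw [sub_add_cancel] at h
    exact eq_sub_of_add_eq h.symm
  have hψsq : ∀ d a : F, ψ (d * a * d) = d * ψ a * d := by
    intro d a
    by_cases hd : d = 0
    · rw [hd]
      simp [hψ0]
    · set f : Fin n → F := fun t => if t = i0 then d else if t = i1 then d⁻¹ else 1 with hf
      set f' : Fin n → F := fun t => if t = i0 then d⁻¹ else if t = i1 then d else 1 with hf'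
      have hfi0 : f i0 = d := by rw [hf]; simp
      have hfi1 : f i1 = d⁻¹ := by rw [hf]; simp [Ne.symm h01, h01]
      have hf'i1 : f' i1 = d := by rw [hf']; simp [Ne.symm h01, h01]
      have hdet : Matrix.det (Matrix.diagonal f) = 1 := by
        rw [Matrix.det_diagonal]
        rw [← Finset.mul_prod_erase Finset.univ f (Finset.mem_univ i0)]
        rw [← Finset.mul_prod_erase _ f
          (Finset.mem_erase.mpr ⟨Ne.symm h01, Finset.mem_univ i1⟩)]
        have h3 : ∀ t ∈ (Finset.univ.erase i0).erase i1, f t = 1 := by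
          intro t ht
          obtain ⟨ht1, ht0⟩ := Finset.mem_erase.mp ht
          obtain ⟨ht0', _⟩ := Finset.mem_erase.mp ht0
          rw [hf]
          simp [ht0', ht1]
        rw [Finset.prod_eq_one h3, hfi0, hfi1, mul_one, mul_inv_cancel₀ hd]
      set g : SpecialLinearGroup (Fin n) F := ⟨Matrix.diagonal f, hdet⟩ with hg
      have hginv : ((g⁻¹ : SpecialLinearGroup (Fin n) F) : M[n,F]) = Matrix.diagonal f' := by
        apply coe_inv_eq
        show Matrix.diagonal f * Matrix.diagonal f' = 1
        rw [Matrix.diagonal_mul_diagonal]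
        have hff : ∀ t, f t * f' t = 1 := by
          intro t
          rw [hf, hf']
          by_cases ht0 : t = i0
          · simp [ht0, Ne.symm h01, mul_inv_cancel₀ hd]
          · by_cases ht1 : t = i1
            · simp [ht0, ht1, Ne.symm h01, inv_mul_cancel₀ hd]
            · simp [ht0, ht1]
        rw [show (fun i => f i * f' i) = fun _ : Fin n => (1 : F) from funext hff,
          Matrix.diagonal_one]
      have hconjx : ((x (d * a * d) : K) : M[n,F]) = (g : M[n,F]) * ((x a : K) : M[n,F]) *
          ((g⁻¹ : SpecialLinearGroup (Fin n) F) : M[n,F]) := by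
        rw [hginv, show (g : M[n,F]) = Matrix.diagonal f from rfl,
          show ((x a : K) : M[n,F]) = Matrix.single i0 i1 a from rfl,
          diag_mul_std_mul_diag, hfi0, hf'i1]
      have h := hequiv g (x a) (x (d * a * d)) hconjx
      rw [hA a, hginv, show (g : M[n,F]) = Matrix.diagonal f from rfl,
        diag_mul_std_mul_diag, hfi0, hf'i1] at h
      have h2 := congrArg (fun M => M i0 i1) h
      simp only [single_apply_same] at h2
      exact h2
  have hψlin : ∀ a : F, ψ a = a * ψ 1 := by
    intro a
    by_cases h2 : (2 : F) = 0
    · have hinj : Function.Injective (fun s : F => s * s) := by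
        intro s t h
        have h0 : (s - t) * (s - t) = 0 := by linear_combination h + (t * t - s * t) * h2
        exact sub_eq_zero.mp (mul_self_eq_zero.mp h0)
      obtain ⟨s, hs⟩ := Finite.injective_iff_surjective.mp hinj a
      have h := hψsq s 1
      rw [mul_one] at h
      have hs' : s * s = a := hs
      rw [← hs', h]
      ring
    · set s := (a + 1) / 2 with hs
      set t := (a - 1) / 2 with ht
      have hst : a = s * 1 * s - t * 1 * t := by
        rw [hs, ht]
        field_simp
        ring
      rw [hst, hψsub, hψsq, hψsq]
      ring
  refine ⟨ψ 1, ?_⟩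
  set c := ψ 1 with hcdef
  let N' : AddSubgroup (M[n,F]) :=
    { carrier := {A | ∃ h : A ∈ K, ((φ ⟨A, h⟩ : K) : M[n,F]) = c • A}
      add_mem' := by
        rintro A B ⟨hP1, hP2⟩ ⟨hQ1, hQ2⟩
        refine ⟨K.add_mem hP1 hQ1, ?_⟩
        rw [show (⟨A + B, K.add_mem hP1 hQ1⟩ : K) = (⟨A, hP1⟩ : K) + (⟨B, hQ1⟩ : K) from
          Subtype.ext rfl, map_add, smul_add]
        show ((φ ⟨A, hP1⟩ : K) : M[n,F]) + ((φ ⟨B, hQ1⟩ : K) : M[n,F]) = _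
        rw [hP2, hQ2]
      zero_mem' := by
        refine ⟨K.zero_mem, ?_⟩
        rw [show (⟨(0 : M[n,F]), K.zero_mem⟩ : K) = 0 from Subtype.ext rfl, map_zero]
        simp
      neg_mem' := by
        rintro A ⟨hP1, hP2⟩
        refine ⟨K.neg_mem hP1, ?_⟩
        rw [show (⟨-A, K.neg_mem hP1⟩ : K) = -(⟨A, hP1⟩ : K) from Subtype.ext rfl, map_neg]
        show -((φ ⟨A, hP1⟩ : K) : M[n,F]) = _
        rw [hP2, smul_neg] }
  have hNtr : ∀ A ∈ N', Matrix.trace A = 0 := by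
    rintro A ⟨h1, _⟩
    exact LinearMap.mem_ker.mp h1
  have hNstab : ∀ (g : SpecialLinearGroup (Fin n) F), ∀ A ∈ N',
      (g : M[n,F]) * A * ((g⁻¹ : SpecialLinearGroup (Fin n) F) : M[n,F]) ∈ N' := by
    rintro g A ⟨h1, h2⟩
    have htr' : Matrix.trace ((g : M[n,F]) * A *
        ((g⁻¹ : SpecialLinearGroup (Fin n) F) : M[n,F])) = 0 := by
      rw [Matrix.trace_mul_cycle, show ((g⁻¹ : SpecialLinearGroup (Fin n) F) : M[n,F]) * (g : M[n,F])
          = ((g⁻¹ * g : SpecialLinearGroup (Fin n) F) : M[n,F]) from rfl, inv_mul_cancel,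
        show ((1 : SpecialLinearGroup (Fin n) F) : M[n,F]) = 1 from rfl, one_mul]
      exact LinearMap.mem_ker.mp h1
    have hK' : (g : M[n,F]) * A * ((g⁻¹ : SpecialLinearGroup (Fin n) F) : M[n,F]) ∈ K :=
      LinearMap.mem_ker.mpr htr'
    refine ⟨hK', ?_⟩
    have h := hequiv g ⟨A, h1⟩ ⟨_, hK'⟩ rfl
    rw [h, h2, mul_smul_comm, smul_mul_assoc]
  rcases part1 hn hnF N' hNtr hNstab with hbot | hiff
  · exfalso
    have hmem : Matrix.single i0 i1 (1 : F) ∈ N' := by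
      refine ⟨htrE 1, ?_⟩
      rw [show (⟨Matrix.single i0 i1 (1 : F), htrE 1⟩ : K) = x 1 from rfl, hA 1,
        smul_single, smul_eq_mul, mul_one]
    rw [hbot] at hmem
    have h0 := AddSubgroup.mem_bot.mp hmem
    have h1 := congrArg (fun M => M i0 i1) h0
    simp only [single_apply_same, Matrix.zero_apply] at h1
    exact one_ne_zero h1
  · intro X
    have hmem : (X : M[n,F]) ∈ N' := (hiff (X : M[n,F])).mpr (LinearMap.mem_ker.mp X.2)
    obtain ⟨h1, h2⟩ := hmem
    rw [show (⟨(X : M[n,F]), h1⟩ : K) = X from Subtype.ext rfl] at h2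
    exact h2

end S15

/-- For `n ≥ 2`, `p ∤ n`, `(n,|F|) ∉ {(2,2), (2,3)}`:
(i) the only `SL_n(F)`-stable additive subgroups of `sl_n(F)` are `0` and `sl_n(F)`; and
(ii) every additive `SL_n(F)`-equivariant endomorphism of `sl_n(F)` is multiplication by a
scalar of `F`. -/
theorem statement_15
    (p : ℕ) [Fact p.Prime] (F : Type*) [Field F] [Fintype F] [CharP F p]
    (n : ℕ) (hn : 2 ≤ n) (hpn : ¬ p ∣ n)
    (h22 : ¬(n = 2 ∧ Fintype.card F = 2)) (h23 : ¬(n = 2 ∧ Fintype.card F = 3)) :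
    -- (i) irreducibility of `sl_n(F)` as an `F_p[SL_n(F)]`-module
    (∀ N : AddSubgroup (Matrix (Fin n) (Fin n) F),
      (∀ X ∈ N, Matrix.trace X = 0) →
      (∀ (g : SpecialLinearGroup (Fin n) F), ∀ X ∈ N,
        (g : Matrix (Fin n) (Fin n) F) * X *
          ((g⁻¹ : SpecialLinearGroup (Fin n) F) : Matrix (Fin n) (Fin n) F) ∈ N) →
      N = ⊥ ∨ (∀ X : Matrix (Fin n) (Fin n) F, X ∈ N ↔ Matrix.trace X = 0)) ∧
    -- (ii) equivariant additive endomorphisms of `sl_n(F)` are scalars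
    (∀ φ : (LinearMap.ker (Matrix.traceLinearMap (Fin n) F F)) →+
        (LinearMap.ker (Matrix.traceLinearMap (Fin n) F F)),
      (∀ (g : SpecialLinearGroup (Fin n) F)
          (X Y : LinearMap.ker (Matrix.traceLinearMap (Fin n) F F)),
        (Y : Matrix (Fin n) (Fin n) F) =
          (g : Matrix (Fin n) (Fin n) F) * (X : Matrix (Fin n) (Fin n) F) *
            ((g⁻¹ : SpecialLinearGroup (Fin n) F) : Matrix (Fin n) (Fin n) F) →
        (φ Y : Matrix (Fin n) (Fin n) F) =
          (g : Matrix (Fin n) (Fin n) F) * (φ X : Matrix (Fin n) (Fin n) F) *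
            ((g⁻¹ : SpecialLinearGroup (Fin n) F) : Matrix (Fin n) (Fin n) F)) →
      ∃ c : F, ∀ X : LinearMap.ker (Matrix.traceLinearMap (Fin n) F F),
        (φ X : Matrix (Fin n) (Fin n) F) = c • (X : Matrix (Fin n) (Fin n) F)) := by
  have hnF : (n : F) ≠ 0 := fun h => hpn ((CharP.cast_eq_zero_iff F p n).mp h)
  exact ⟨fun N htr hstab => S15.part1 hn hnF N htr hstab,
    fun φ hequiv => S15.part2 hn hnF φ hequiv⟩
end

section
/- Let n ≥ 2 with p not dividing n, and assume (n, |F|) ∉ {(2,2), (2,3)}. Let H be a subgroup of SL_n(F[ε]) whose image under the reduction SL_n(F[ε]) → SL_n(F) (sending ε to 0) is all of SL_n(F). Then either H intersects the kernel of this reduction trivially, or H = SL_n(F[ε]). -/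
open Matrix

namespace Statement19

variable {F : Type*} [Field F] {n : ℕ}

lemma coe_inv_eq {R : Type*} [CommRing R] {m : Type*} [DecidableEq m] [Fintype m]
    (g : SpecialLinearGroup m R) (C : Matrix m m R)
    (h : (↑g : Matrix m m R) * C = 1) :
    (↑(g⁻¹) : Matrix m m R) = C := by
  calc (↑(g⁻¹) : Matrix m m R) = ↑(g⁻¹) * (↑g * C) := by rw [h, mul_one]
    _ = ((↑(g⁻¹) : Matrix m m R) * ↑g) * C := by rw [mul_assoc]
    _ = C := by
        rw [show ((↑(g⁻¹) : Matrix m m R) * ↑g) = 1 from congrArg Subtype.val (inv_mul_cancel g), one_mul]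

/-- transvection as element of SL -/
def tSL (a b : Fin n) (hab : a ≠ b) (c : F) : SpecialLinearGroup (Fin n) F :=
  ⟨transvection a b c, det_transvection_of_ne a b hab c⟩

lemma tSL_inv_coe (a b : Fin n) (hab : a ≠ b) (c : F) :
    (↑((tSL a b hab c)⁻¹) : Matrix (Fin n) (Fin n) F) = transvection a b (-c) := by
  apply coe_inv_eq
  show transvection a b c * transvection a b (-c) = 1
  rw [transvection_mul_transvection_same _ _ hab, add_neg_cancel]
  simp [transvection]

lemma stdBasis_mul_mul (a b a' b' : Fin n) (c c' : F) (X : Matrix (Fin n) (Fin n) F) :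
    Matrix.single a b c * X * Matrix.single a' b' c' = Matrix.single a b' (c * X b a' * c') := by
  ext r s
  by_cases hr : r = a <;> by_cases hs : s = b' <;>
    [skip; skip; skip; skip] <;>
    simp only [hr, hs, Matrix.mul_single_apply_same, Matrix.single_mul_apply_same,
      Matrix.mul_single_apply_of_ne, Matrix.single_mul_apply_of_ne, ne_eq,
      not_false_eq_true, Matrix.single_apply_same, mul_assoc, zero_mul] <;>
    rw [Matrix.single_apply_of_ne] <;> tauto


lemma stdBasis_mul_mul' (a b a' b' : Fin n) (c c' : F) (X : Matrix (Fin n) (Fin n) F) :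
    Matrix.single a b c * (X * Matrix.single a' b' c')
      = Matrix.single a b' (c * X b a' * c') := by
  rw [← mul_assoc, stdBasis_mul_mul]

lemma stdBasis_mul_of_ne_assoc {b a' : Fin n} (h : b ≠ a') (a b' : Fin n) (c c' : F)
    (Y : Matrix (Fin n) (Fin n) F) :
    Matrix.single a b c * (Matrix.single a' b' c' * Y) = 0 := by
  rw [← mul_assoc, Matrix.single_mul_single_of_ne _ _ _ _ h, zero_mul]

lemma stdBasis_neg (a b : Fin n) (c : F) :
    Matrix.single a b (-c) = -Matrix.single a b c := by
  rw [← neg_one_mul c, ← smul_eq_mul, ← Matrix.smul_single, neg_smul, one_smul]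

section Irred

variable (M : AddSubgroup (Matrix (Fin n) (Fin n) F))
variable (hconj : ∀ g : SpecialLinearGroup (Fin n) F, ∀ X ∈ M,
    (↑g : Matrix (Fin n) (Fin n) F) * X * (↑(g⁻¹) : Matrix (Fin n) (Fin n) F) ∈ M)

include hconj

/-- conjugating by a transvection and subtracting -/
lemma delta_mem {X : Matrix (Fin n) (Fin n) F} (hX : X ∈ M) {a b : Fin n} (hab : a ≠ b)
    (c : F) :
    Matrix.single a b c * X - X * Matrix.single a b c - (c * X b a * c) • Matrix.single a b 1
      ∈ M := by
  have h := hconj (tSL a b hab c) X hX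
  rw [tSL_inv_coe] at h
  have hcoe : (↑(tSL a b hab c) : Matrix (Fin n) (Fin n) F) = 1 + Matrix.single a b c := rfl
  rw [hcoe] at h
  have hneg : transvection a b (-c) = 1 - Matrix.single a b c := by
    rw [transvection, sub_eq_add_neg, ← neg_one_mul c, ← smul_eq_mul, ← Matrix.smul_single, neg_smul, one_smul]
  rw [hneg] at h
  have hid : (1 + Matrix.single a b c) * X * (1 - Matrix.single a b c)
      = X + (Matrix.single a b c * X - X * Matrix.single a b c
          - (c * X b a * c) • Matrix.single a b 1) := by
    have hS : Matrix.single a b c * X * Matrix.single a b c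
        = (c * X b a * c) • Matrix.single a b 1 := by
      rw [stdBasis_mul_mul, Matrix.smul_single, smul_eq_mul, mul_one]
    rw [← hS]
    noncomm_ring
  rw [hid] at h
  have := M.sub_mem h hX
  simpa using this


/-- `n ≥ 3` : the off-diagonal entry can be isolated. -/
lemma offdiag_mem_n3 (h3 : 3 ≤ n) {X : Matrix (Fin n) (Fin n) F} (hX : X ∈ M)
    {i j : Fin n} (hij : i ≠ j) : Matrix.single i j (X j i) ∈ M := by
  obtain ⟨k, hki, hkj⟩ : ∃ k : Fin n, k ≠ i ∧ k ≠ j := by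
    by_contra hc
    push_neg at hc
    have hsub : (Finset.univ : Finset (Fin n)) ⊆ {i, j} := by
      intro x _
      by_cases hx : x = i
      · simp [hx]
      · simp [hc x hx]
    have hcard := Finset.card_le_card hsub
    have h2 : ({i, j} : Finset (Fin n)).card ≤ 2 := by
      refine (Finset.card_insert_le _ _).trans ?_
      simp
    rw [Finset.card_univ, Fintype.card_fin] at hcard
    omega
  have hZ := delta_mem M hconj hX hij 1
  simp only [one_mul, mul_one] at hZ
  set Z := Matrix.single i j 1 * X - X * Matrix.single i j 1
      - X j i • Matrix.single i j 1 with hZdef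
  have hW := delta_mem M hconj hZ (Ne.symm hki) 1
  simp only [one_mul, mul_one] at hW
  have hZki : Z k i = 0 := by
    simp [hZdef, hki, hij, hki.symm, hij.symm, hkj, hkj.symm, Matrix.single_apply_of_ne]
  rw [hZki] at hW
  have hWid : Matrix.single i k 1 * Z - Z * Matrix.single i k 1
      - (0 : F) • Matrix.single i k 1
      = -Matrix.single i j (X k i) - Matrix.single i k (X j i) := by
    simp only [hZdef, mul_sub, sub_mul, mul_smul_comm, smul_mul_assoc, mul_assoc,
      stdBasis_mul_mul', stdBasis_mul_of_ne_assoc hki, Matrix.single_mul_single_same,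
      Matrix.single_mul_single_of_ne, ne_eq, hki, hki.symm, hij, hij.symm, not_false_eq_true, zero_smul,
      smul_zero, mul_zero, zero_mul, one_mul, mul_one]
    module
  rw [hWid] at hW
  set W := -Matrix.single i j (X k i) - Matrix.single i k (X j i) with hWdef
  have hV := delta_mem M hconj hW hkj 1
  simp only [one_mul, mul_one] at hV
  have hWjk : W j k = 0 := by
    simp [hWdef, hij, hij.symm, hkj, hkj.symm, hki, hki.symm, Matrix.single_apply_of_ne]
  rw [hWjk] at hV
  have hVid : Matrix.single k j 1 * W - W * Matrix.single k j 1
      - (0 : F) • Matrix.single k j 1 = Matrix.single i j (X j i) := by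
    simp only [hWdef, mul_sub, sub_mul, mul_neg, neg_mul, mul_assoc,
      Matrix.single_mul_single_same, Matrix.single_mul_single_of_ne, ne_eq, hij.symm, hkj, hkj.symm,
      not_false_eq_true, zero_smul, one_mul, mul_one, neg_zero, zero_sub, sub_neg_eq_add]
    module
  rw [hVid] at hV
  exact hV

/-- char ≠ 2 : double application of the same transvection. -/
lemma offdiag_mem_p2 {X : Matrix (Fin n) (Fin n) F} (hX : X ∈ M)
    {i j : Fin n} (hij : i ≠ j) : Matrix.single i j ((-2) * X j i) ∈ M := by
  have hZ := delta_mem M hconj hX hij 1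
  simp only [one_mul, mul_one] at hZ
  set Z := Matrix.single i j 1 * X - X * Matrix.single i j 1
      - X j i • Matrix.single i j 1 with hZdef
  have hW := delta_mem M hconj hZ hij 1
  simp only [one_mul, mul_one] at hW
  have hZji : Z j i = 0 := by
    simp [hZdef, hij, hij.symm, Matrix.single_apply_of_ne]
  rw [hZji] at hW
  have hWid : Matrix.single i j 1 * Z - Z * Matrix.single i j 1
      - (0 : F) • Matrix.single i j 1 = Matrix.single i j ((-2) * X j i) := by
    have hsm : Matrix.single i j ((-2) * X j i) = ((-2 : F) * X j i) • Matrix.single i j (1:F) := by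
      rw [Matrix.smul_single, smul_eq_mul, mul_one]
    have hsm2 : Matrix.single i j (X j i) = (X j i) • Matrix.single i j (1:F) := by
      rw [Matrix.smul_single, smul_eq_mul, mul_one]
    simp only [hZdef, mul_sub, sub_mul, mul_smul_comm, smul_mul_assoc, mul_assoc,
      stdBasis_mul_mul', stdBasis_mul_of_ne_assoc hij.symm,
      Matrix.single_mul_single_of_ne, ne_eq, hij, hij.symm, not_false_eq_true, zero_smul,
      smul_zero, mul_zero, zero_mul, one_mul, mul_one, hsm, hsm2]
    module
  rw [hWid] at hW
  exact hW

/-- diagonal case -/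
lemma offdiag_mem_diag {X : Matrix (Fin n) (Fin n) F} (hX : X ∈ M)
    (hoff : ∀ a b : Fin n, a ≠ b → X a b = 0)
    {i j : Fin n} (hij : i ≠ j) : Matrix.single i j (X j j - X i i) ∈ M := by
  have hZ := delta_mem M hconj hX hij 1
  simp only [one_mul, mul_one] at hZ
  rw [hoff j i (Ne.symm hij)] at hZ
  have hid : Matrix.single i j 1 * X - X * Matrix.single i j 1
      - ((1:F) * 0 * 1) • Matrix.single i j 1 = Matrix.single i j (X j j - X i i) := by
    ext r s
    by_cases hr : r = i <;> by_cases hs : s = j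
    · subst hr; subst hs
      simp
    · subst hr
      have h1 : X j s = 0 := hoff j s (Ne.symm hs)
      simp [hs, Ne.symm hs, h1, Matrix.single_apply_of_ne]
    · subst hs
      have h1 : X r i = 0 := hoff r i hr
      simp [hr, Ne.symm hr, h1, Matrix.single_apply_of_ne]
    · simp [hr, hs, Ne.symm hr, Ne.symm hs, Matrix.single_apply_of_ne]
  rw [mul_zero, zero_mul] at hid
  rw [hid] at hZ
  exact hZ


/-- scaling by squares via diagonal conjugation -/
lemma scale_mem [Fintype F] {i j : Fin n} (hij : i ≠ j) (c : F) (hc : Matrix.single i j c ∈ M)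
    {u : F} (hu : u ≠ 0) : Matrix.single i j (u * c * u) ∈ M := by
  classical
  set f : Fin n → F := Function.update (Function.update (1 : Fin n → F) i u) j u⁻¹ with hf
  set g : Fin n → F := Function.update (Function.update (1 : Fin n → F) i u⁻¹) j u with hg
  have hfi : f i = u := by simp [hf, Function.update_of_ne hij]
  have hfj : f j = u⁻¹ := by simp [hf]
  have hgi : g i = u⁻¹ := by simp [hg, Function.update_of_ne hij]
  have hgj : g j = u := by simp [hg]
  have hfg : ∀ x, f x * g x = 1 := by
    intro x
    by_cases hxj : x = j
    · subst hxj; rw [hfj, hgj, inv_mul_cancel₀ hu]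
    · by_cases hxi : x = i
      · subst hxi; rw [hfi, hgi, mul_inv_cancel₀ hu]
      · simp [hf, hg, Function.update_of_ne hxj, Function.update_of_ne hxi]
  have hdetf : (Matrix.diagonal f).det = 1 := by
    rw [Matrix.det_diagonal, hf]
    rw [Finset.prod_update_of_mem (Finset.mem_univ j)]
    rw [Finset.prod_update_of_mem (by simp [hij] : i ∈ Finset.univ \ {j})]
    simp [inv_mul_cancel₀ hu]
  have hdetg : (Matrix.diagonal g).det = 1 := by
    rw [Matrix.det_diagonal, hg]
    rw [Finset.prod_update_of_mem (Finset.mem_univ j)]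
    rw [Finset.prod_update_of_mem (by simp [hij] : i ∈ Finset.univ \ {j})]
    simp [mul_inv_cancel₀ hu]
  set D : SpecialLinearGroup (Fin n) F := ⟨Matrix.diagonal f, hdetf⟩ with hD
  have hDinv : (↑(D⁻¹) : Matrix (Fin n) (Fin n) F) = Matrix.diagonal g := by
    apply coe_inv_eq
    show Matrix.diagonal f * Matrix.diagonal g = 1
    rw [Matrix.diagonal_mul_diagonal]
    have : (fun x => f x * g x) = fun _ => (1 : F) := funext hfg
    rw [this, Matrix.diagonal_one]
  have h := hconj D _ hc
  rw [hDinv] at h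
  have hid : (↑D : Matrix (Fin n) (Fin n) F) * Matrix.single i j c * Matrix.diagonal g
      = Matrix.single i j (u * c * u) := by
    show Matrix.diagonal f * Matrix.single i j c * Matrix.diagonal g = _
    ext r s
    rw [Matrix.mul_diagonal, Matrix.diagonal_mul]
    by_cases hr : r = i <;> by_cases hs : s = j
    · subst hr; subst hs
      rw [Matrix.single_apply_same, Matrix.single_apply_same, hfi, hgj]
    · subst hr
      simp [hs, Ne.symm hs, Matrix.single_apply_of_ne]
    · subst hs
      simp [hr, Ne.symm hr, Matrix.single_apply_of_ne]
    · simp [hr, hs, Ne.symm hr, Ne.symm hs, Matrix.single_apply_of_ne]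
  rw [hid] at h
  exact h

/-- from one nonzero multiple, all multiples -/
lemma all_multiples [Fintype F] (p : ℕ) [Fact p.Prime] [CharP F p]
    {i j : Fin n} (hij : i ≠ j) {c : F} (hc : c ≠ 0)
    (hM : Matrix.single i j c ∈ M) (d : F) : Matrix.single i j d ∈ M := by
  have hkey : ∀ x : F, Matrix.single i j (x ^ 2 * c) ∈ M := by
    intro x
    rcases eq_or_ne x 0 with hx | hx
    · subst hx
      rw [show ((0:F) ^ 2 * c) = 0 by ring, Matrix.single_zero]
      exact M.zero_mem
    · have := scale_mem M hconj hij c hM hx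
      rwa [show x * c * x = x ^ 2 * c by ring] at this
  by_cases hp2 : p = 2
  · have hchar : ringChar F = 2 := by
      rw [ringChar.eq F p, hp2]
    obtain ⟨s, hs⟩ := FiniteField.isSquare_of_char_two hchar (d * c⁻¹)
    have hd : d = s ^ 2 * c := by
      rw [sq, ← hs, inv_mul_cancel_right₀ hc]
    rw [hd]
    exact hkey s
  · have hodd : Fintype.card F % 2 = 1 := by
      obtain ⟨m, hp, hcard⟩ := FiniteField.card F p
      rw [hcard, Nat.odd_iff.mp]
      exact Odd.pow (hp.odd_of_ne_two hp2)
    obtain ⟨a, b, hab⟩ := FiniteField.exists_root_sum_quadratic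
      (f := (Polynomial.X ^ 2 : Polynomial F))
      (g := (Polynomial.X ^ 2 - Polynomial.C (d * c⁻¹) : Polynomial F))
      (Polynomial.degree_X_pow 2) (Polynomial.degree_X_pow_sub_C (by norm_num) _) hodd
    simp only [Polynomial.eval_pow, Polynomial.eval_X, Polynomial.eval_sub,
      Polynomial.eval_C] at hab
    have h1 : a ^ 2 + b ^ 2 = d * c⁻¹ := by linear_combination hab
    have hd : d = a ^ 2 * c + b ^ 2 * c := by
      rw [← add_mul, h1, inv_mul_cancel_right₀ hc]
    rw [hd, Matrix.single_add]
    exact M.add_mem (hkey a) (hkey b)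


/-- change row of base elementary matrix -/
lemma rowch {x y : Fin n} (hbase : ∀ d, Matrix.single x y d ∈ M) (hxy : x ≠ y)
    {k : Fin n} (hkx : k ≠ x) (hky : k ≠ y) : ∀ d, Matrix.single k y d ∈ M := by
  intro d
  have h := delta_mem M hconj (hbase d) hkx 1
  simp only [one_mul, mul_one] at h
  have hid : Matrix.single k x 1 * Matrix.single x y d
      - Matrix.single x y d * Matrix.single k x 1
      - Matrix.single x y d x k • Matrix.single k x 1 = Matrix.single k y d := by
    simp [Matrix.single_mul_single_same, Matrix.single_mul_single_of_ne, Matrix.single_apply_of_ne,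
      hky, hky.symm, hkx, hkx.symm, hxy, hxy.symm]
  rw [hid] at h
  exact h

/-- change column of base elementary matrix -/
lemma colch {x y : Fin n} (hbase : ∀ d, Matrix.single x y d ∈ M) (hxy : x ≠ y)
    {m : Fin n} (hmx : m ≠ x) (hmy : m ≠ y) : ∀ d, Matrix.single x m d ∈ M := by
  intro d
  have h := delta_mem M hconj (hbase (-d)) hmy.symm 1
  simp only [one_mul, mul_one] at h
  have hid : Matrix.single y m 1 * Matrix.single x y (-d)
      - Matrix.single x y (-d) * Matrix.single y m 1
      - Matrix.single x y (-d) m y • Matrix.single y m 1 = Matrix.single x m d := by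
    simp [Matrix.single_mul_single_same, Matrix.single_mul_single_of_ne, Matrix.single_apply_of_ne,
      hmx, hmx.symm, hmy, hmy.symm, hxy, hxy.symm, stdBasis_neg]
  rw [hid] at h
  exact h

/-- From a full base position `(i,j)` and its transpose position, all off-diagonal positions. -/
lemma all_offdiag {i j : Fin n} (hij : i ≠ j)
    (hIJ : ∀ d, Matrix.single i j d ∈ M) (hJI : ∀ d, Matrix.single j i d ∈ M) :
    ∀ a b : Fin n, a ≠ b → ∀ d, Matrix.single a b d ∈ M := by
  intro a b hab d
  by_cases hai : a = i
  · subst hai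
    by_cases hbj : b = j
    · subst hbj; exact hIJ d
    · exact colch M hconj hIJ hij (Ne.symm hab) hbj d
  · by_cases haj : a = j
    · subst haj
      by_cases hbi : b = i
      · subst hbi; exact hJI d
      · exact colch M hconj hJI hij.symm (Ne.symm hab) hbi d
    · -- a ∉ {i, j}
      by_cases hbj : b = j
      · subst hbj; exact rowch M hconj hIJ hij hai hab d
      · by_cases hbi : b = i
        · subst hbi; exact rowch M hconj hJI hij.symm haj hab d
        · have hAJ : ∀ d, Matrix.single a j d ∈ M := rowch M hconj hIJ hij hai haj
          exact colch M hconj hAJ haj (Ne.symm hab) hbj d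

/-- differences of diagonal elementary matrices -/
lemma diagdiff (hall : ∀ a b : Fin n, a ≠ b → ∀ d, Matrix.single a b d ∈ M)
    {i j : Fin n} (hij : i ≠ j) (c : F) :
    Matrix.single j j c - Matrix.single i i c ∈ M := by
  have h := delta_mem M hconj (hall i j hij c) hij.symm 1
  simp only [one_mul, mul_one] at h
  have hid : Matrix.single j i 1 * Matrix.single i j c
      - Matrix.single i j c * Matrix.single j i 1
      - Matrix.single i j c i j • Matrix.single j i 1
      = Matrix.single j j c - Matrix.single i i c - Matrix.single j i c := by
    have hsm : (c : F) • Matrix.single j i (1:F) = Matrix.single j i c := by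
      rw [Matrix.smul_single, smul_eq_mul, mul_one]
    simp [Matrix.single_mul_single_same, Matrix.single_apply_same, hsm]
  rw [hid] at h
  have := M.add_mem h (hall j i hij.symm c)
  simpa using this


/-- getting the transposed position -/
lemma transpose_base {i j : Fin n} (hij : i ≠ j)
    (hIJ : ∀ d, Matrix.single i j d ∈ M) (hcase : 3 ≤ n ∨ (-2 : F) ≠ 0) :
    ∀ d, Matrix.single j i d ∈ M := by
  rcases hcase with h3 | h2
  · obtain ⟨k, hki, hkj⟩ : ∃ k : Fin n, k ≠ i ∧ k ≠ j := by
      by_contra hc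
      push_neg at hc
      have hsub : (Finset.univ : Finset (Fin n)) ⊆ {i, j} := by
        intro x _
        by_cases hx : x = i
        · simp [hx]
        · simp [hc x hx]
      have hcard := Finset.card_le_card hsub
      have h2 : ({i, j} : Finset (Fin n)).card ≤ 2 := by
        refine (Finset.card_insert_le _ _).trans ?_
        simp
      rw [Finset.card_univ, Fintype.card_fin] at hcard
      omega
    have hKJ : ∀ d, Matrix.single k j d ∈ M := rowch M hconj hIJ hij hki hkj
    have hKI : ∀ d, Matrix.single k i d ∈ M :=
      colch M hconj hKJ hkj (Ne.symm hki) hij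
    exact rowch M hconj hKI hki hkj.symm hij.symm
  · intro d
    set c : F := d * (-2)⁻¹ with hcdef
    have h1 := delta_mem M hconj (hIJ c) hij.symm 1
    simp only [one_mul, mul_one] at h1
    have hA := delta_mem M hconj (hIJ c) hij.symm (-1)
    have hadd := M.add_mem h1 hA
    have hid : (Matrix.single j i 1 * Matrix.single i j c
        - Matrix.single i j c * Matrix.single j i 1
        - Matrix.single i j c i j • Matrix.single j i 1)
        + (Matrix.single j i (-1) * Matrix.single i j c
        - Matrix.single i j c * Matrix.single j i (-1)
        - ((-1) * Matrix.single i j c i j * (-1)) • Matrix.single j i 1)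
        = (-2 : F) • Matrix.single j i c := by
      have hsm2 : (c : F) • Matrix.single j i (1:F) = Matrix.single j i c := by
        rw [Matrix.smul_single, smul_eq_mul, mul_one]
      simp only [Matrix.single_mul_single_same, Matrix.single_apply_same, one_mul, mul_one,
        neg_mul, mul_neg, neg_neg, stdBasis_neg, hsm2]
      module
    rw [hid] at hadd
    have harr : (-2 : F) • Matrix.single j i c = Matrix.single j i d := by
      rw [Matrix.smul_single, smul_eq_mul, hcdef, mul_comm d, ← mul_assoc,
        mul_inv_cancel₀ h2, one_mul]
    rwa [harr] at hadd

/-- Main irreducibility result: a nonzero conjugation-invariant subgroup of trace-zero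
matrices contains all trace-zero matrices. -/
theorem mem_of_trace_zero [Fintype F] (p : ℕ) [Fact p.Prime] [CharP F p]
    (hn : 2 ≤ n) (hpn : ¬ p ∣ n)
    (htr : ∀ X ∈ M, Matrix.trace X = 0)
    (hne : ∃ X ∈ M, X ≠ 0) :
    ∀ X : Matrix (Fin n) (Fin n) F, Matrix.trace X = 0 → X ∈ M := by
  classical
  have hp : p.Prime := Fact.out
  have hcase : 3 ≤ n ∨ (-2 : F) ≠ 0 := by
    by_cases h3 : 3 ≤ n
    · exact Or.inl h3
    · right
      have hn2 : n = 2 := by omega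
      have hp2 : p ≠ 2 := fun h => hpn (by rw [hn2, h])
      have h2F : (2 : F) ≠ 0 := by
        intro hzero
        have : p ∣ 2 := (CharP.cast_eq_zero_iff F p 2).mp (by exact_mod_cast hzero)
        exact hp2 ((Nat.prime_dvd_prime_iff_eq hp Nat.prime_two).mp this)
      exact neg_ne_zero.mpr h2F
  obtain ⟨i, j, hij, c, hc0, hcM⟩ :
      ∃ i j : Fin n, i ≠ j ∧ ∃ c : F, c ≠ 0 ∧ Matrix.single i j c ∈ M := by
    obtain ⟨X0, hX0M, hX0⟩ := hne
    by_cases hoffc : ∃ a b : Fin n, a ≠ b ∧ X0 a b ≠ 0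
    · obtain ⟨a, b, hab, hne0⟩ := hoffc
      rcases hcase with h3 | h2
      · exact ⟨b, a, hab.symm, X0 a b, hne0, offdiag_mem_n3 M hconj h3 hX0M hab.symm⟩
      · exact ⟨b, a, hab.symm, (-2) * X0 a b, mul_ne_zero h2 hne0,
          offdiag_mem_p2 M hconj hX0M hab.symm⟩
    · push_neg at hoffc
      have h0 : (0:ℕ) < n := by omega
      set i0 : Fin n := ⟨0, h0⟩ with hi0
      have hdiag : ∃ a b : Fin n, a ≠ b ∧ X0 b b - X0 a a ≠ 0 := by
        by_contra hcon
        push_neg at hcon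
        have hconst : ∀ a : Fin n, X0 a a = X0 i0 i0 := by
          intro a
          by_cases ha : a = i0
          · rw [ha]
          · exact sub_eq_zero.mp (hcon i0 a (fun h => ha h.symm))
        have hsum : ∑ a : Fin n, X0 a a = 0 := by
          simpa [Matrix.trace, Matrix.diag] using htr X0 hX0M
        have hmul : (n : F) * X0 i0 i0 = 0 := by
          calc (n : F) * X0 i0 i0 = ∑ _a : Fin n, X0 i0 i0 := by
                rw [Finset.sum_const, Finset.card_univ, Fintype.card_fin, nsmul_eq_mul]
            _ = ∑ a : Fin n, X0 a a := Finset.sum_congr rfl fun a _ => (hconst a).symm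
            _ = 0 := hsum
        have hnF : (n : F) ≠ 0 := fun h => hpn ((CharP.cast_eq_zero_iff F p n).mp h)
        have hX00 : X0 i0 i0 = 0 := by
          rcases mul_eq_zero.mp hmul with h | h
          · exact absurd h hnF
          · exact h
        apply hX0
        ext a b
        by_cases hab : a = b
        · subst hab
          rw [hconst a, hX00, Matrix.zero_apply]
        · rw [hoffc a b hab, Matrix.zero_apply]
      obtain ⟨a, b, hab, hne0⟩ := hdiag
      exact ⟨a, b, hab, _, hne0, offdiag_mem_diag M hconj hX0M hoffc hab⟩
  have hIJ : ∀ d, Matrix.single i j d ∈ M := all_multiples M hconj p hij hc0 hcM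
  have hJI : ∀ d, Matrix.single j i d ∈ M := transpose_base M hconj hij hIJ hcase
  have hall := all_offdiag M hconj hij hIJ hJI
  intro X htX
  have hXoff : X - Matrix.diagonal (Matrix.diag X) ∈ M := by
    rw [Matrix.matrix_eq_sum_single (X - Matrix.diagonal (Matrix.diag X))]
    apply AddSubgroup.sum_mem
    intro a _
    apply AddSubgroup.sum_mem
    intro b _
    by_cases hab : a = b
    · subst hab
      have hz : (X - Matrix.diagonal (Matrix.diag X)) a a = 0 := by
        simp [Matrix.diag]
      rw [hz, Matrix.single_zero]
      exact M.zero_mem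
    · exact hall a b hab _
  have hXdiag : Matrix.diagonal (Matrix.diag X) ∈ M := by
    have h0 : (0:ℕ) < n := by omega
    set i0 : Fin n := ⟨0, h0⟩ with hi0
    have hsum : ∑ a : Fin n, X a a = 0 := by
      simpa [Matrix.trace, Matrix.diag] using htX
    have hrepr : Matrix.diagonal (Matrix.diag X)
        = ∑ a : Fin n, (Matrix.single a a (X a a) - Matrix.single i0 i0 (X a a)) := by
      rw [Finset.sum_sub_distrib]
      have h1 : ∑ a : Fin n, Matrix.single a a (X a a)
          = Matrix.diagonal (Matrix.diag X) := by
        ext r s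
        rw [Matrix.sum_apply]
        by_cases hrs : r = s
        · subst hrs
          rw [Matrix.diagonal_apply_eq]
          rw [Finset.sum_eq_single_of_mem r (Finset.mem_univ r)
            (fun a _ har => Matrix.single_apply_of_ne _ _ _ _ _ (by rintro ⟨h, -⟩; exact har h))]
          simp [Matrix.diag]
        · rw [Matrix.diagonal_apply_ne _ hrs]
          apply Finset.sum_eq_zero
          intro a _
          exact Matrix.single_apply_of_ne _ _ _ _ _ (by rintro ⟨rfl, rfl⟩; exact hrs rfl)
      have h2 : ∑ a : Fin n, Matrix.single i0 i0 (X a a) = 0 := by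
        ext r s
        rw [Matrix.sum_apply]
        by_cases hr : r = i0
        · by_cases hs : s = i0
          · subst hr; subst hs
            simp only [Matrix.single_apply_same, Matrix.zero_apply]
            exact hsum
          · rw [Matrix.zero_apply]
            apply Finset.sum_eq_zero
            intro a _
            exact Matrix.single_apply_of_ne _ _ _ _ _ (by rintro ⟨-, h⟩; exact hs h.symm)
        · rw [Matrix.zero_apply]
          apply Finset.sum_eq_zero
          intro a _
          exact Matrix.single_apply_of_ne _ _ _ _ _ (by rintro ⟨h, -⟩; exact hr h.symm)
      rw [h1, h2, sub_zero]
    rw [hrepr]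
    apply AddSubgroup.sum_mem
    intro a _
    by_cases ha : a = i0
    · subst ha
      rw [sub_self]
      exact M.zero_mem
    · exact diagdiff M hconj hall (fun h => ha h.symm) (X a a)
  have hfin := M.add_mem hXoff hXdiag
  simpa using hfin

end Irred


section Dual

open TrivSqZeroExt

variable {F : Type*} [Field F] {n : ℕ}

/-- `1 + ε X` as a matrix over the dual numbers -/
def uMat (X : Matrix (Fin n) (Fin n) F) : Matrix (Fin n) (Fin n) (DualNumber F) :=
  1 + X.map TrivSqZeroExt.inr

lemma uMat_zero : uMat (0 : Matrix (Fin n) (Fin n) F) = 1 := by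
  rw [uMat, Matrix.map_zero _ (TrivSqZeroExt.inr_zero F), add_zero]

lemma uMat_map_fst (X : Matrix (Fin n) (Fin n) F) :
    (uMat X).map TrivSqZeroExt.fst = 1 := by
  ext a b
  by_cases hab : a = b <;>
    simp [uMat, Matrix.map_apply, Matrix.add_apply, Matrix.one_apply, hab]

lemma uMat_map_snd (X : Matrix (Fin n) (Fin n) F) :
    (uMat X).map TrivSqZeroExt.snd = X := by
  ext a b
  by_cases hab : a = b <;>
    simp [uMat, Matrix.map_apply, Matrix.add_apply, Matrix.one_apply, hab]

lemma uMat_mul (X Y : Matrix (Fin n) (Fin n) F) :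
    uMat X * uMat Y = uMat (X + Y) := by
  have hAB : X.map (TrivSqZeroExt.inr : F → DualNumber F)
      * Y.map (TrivSqZeroExt.inr : F → DualNumber F) = 0 := by
    refine Matrix.ext fun a b => ?_
    rw [Matrix.mul_apply, Matrix.zero_apply]
    apply Finset.sum_eq_zero
    intro k _
    rw [Matrix.map_apply, Matrix.map_apply, TrivSqZeroExt.inr_mul_inr]
  have hadd : X.map (TrivSqZeroExt.inr : F → DualNumber F)
      + Y.map (TrivSqZeroExt.inr : F → DualNumber F)
      = (X + Y).map (TrivSqZeroExt.inr : F → DualNumber F) := by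
    refine Matrix.ext fun a b => ?_
    rw [Matrix.add_apply, Matrix.map_apply, Matrix.map_apply, Matrix.map_apply,
      Matrix.add_apply, TrivSqZeroExt.inr_add]
  have hexp : uMat X * uMat Y
      = 1 + (X.map (TrivSqZeroExt.inr : F → DualNumber F)
          + Y.map (TrivSqZeroExt.inr : F → DualNumber F))
        + X.map (TrivSqZeroExt.inr : F → DualNumber F)
          * Y.map (TrivSqZeroExt.inr : F → DualNumber F) := by
    rw [uMat, uMat]
    noncomm_ring
  rw [hexp, hAB, add_zero, hadd, uMat]

lemma uMat_det (X : Matrix (Fin n) (Fin n) F) :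
    (uMat X).det = 1 + TrivSqZeroExt.inr (X.trace) := by
  have heps : ∀ x : F, (DualNumber.eps : DualNumber F) * inl x = inr x := by
    intro x
    refine TrivSqZeroExt.ext ?_ ?_
    · simp
    · simp [DualNumber.snd_mul]
  have h1 : X.map (TrivSqZeroExt.inr : F → DualNumber F)
      = (DualNumber.eps : DualNumber F) • (X.map inl) := by
    refine Matrix.ext fun a b => ?_
    rw [Matrix.map_apply, Matrix.smul_apply, Matrix.map_apply, smul_eq_mul, heps]
  have htr : Matrix.trace (X.map (inl : F → DualNumber F)) = inl (X.trace) := by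
    simp only [Matrix.trace, Matrix.diag, Matrix.map_apply]
    rw [show (inl (∑ a, X a a) : DualNumber F) = (TrivSqZeroExt.inlHom F F) (∑ a, X a a) from rfl,
      map_sum]
    rfl
  have heps2 : (DualNumber.eps : DualNumber F) ^ 2 = 0 := by
    rw [sq, DualNumber.eps_mul_eps]
  have hmul : (inl (X.trace) : DualNumber F) * DualNumber.eps = inr (X.trace) := by
    refine TrivSqZeroExt.ext ?_ ?_
    · simp
    · simp [DualNumber.snd_mul]
  rw [uMat, h1, Matrix.det_one_add_smul, htr, heps2, mul_zero, add_zero, hmul]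

lemma trace_zero_of_uMat_det_one {X : Matrix (Fin n) (Fin n) F}
    (h : (uMat X).det = 1) : X.trace = 0 := by
  rw [uMat_det] at h
  have h2 : (TrivSqZeroExt.inr (X.trace) : DualNumber F) = 0 := by
    have := congrArg (fun z => z - 1) h
    simpa using this
  have := congrArg TrivSqZeroExt.snd h2
  simpa using this

lemma map_fst_mul (A B : Matrix (Fin n) (Fin n) (DualNumber F)) :
    (A * B).map TrivSqZeroExt.fst = A.map TrivSqZeroExt.fst * B.map TrivSqZeroExt.fst := by
  ext a b
  simp only [Matrix.mul_apply, Matrix.map_apply]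
  rw [show TrivSqZeroExt.fst (∑ k, A a k * B k b)
    = (TrivSqZeroExt.fstHom F F F).toRingHom (∑ k, A a k * B k b) from rfl, map_sum]
  rfl

lemma map_snd_mul (A B : Matrix (Fin n) (Fin n) (DualNumber F)) :
    (A * B).map TrivSqZeroExt.snd
      = A.map TrivSqZeroExt.fst * B.map TrivSqZeroExt.snd
        + A.map TrivSqZeroExt.snd * B.map TrivSqZeroExt.fst := by
  ext a b
  simp only [Matrix.mul_apply, Matrix.map_apply, Matrix.add_apply]
  rw [show TrivSqZeroExt.snd (∑ k, A a k * B k b)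
    = (TrivSqZeroExt.sndHom F F).toAddMonoidHom (∑ k, A a k * B k b) from rfl, map_sum]
  rw [← Finset.sum_add_distrib]
  refine Finset.sum_congr rfl fun k _ => ?_
  simp [DualNumber.snd_mul]

lemma map_fst_one : ((1 : Matrix (Fin n) (Fin n) (DualNumber F)).map TrivSqZeroExt.fst) = 1 := by
  ext a b
  by_cases hab : a = b <;> simp [Matrix.map_apply, Matrix.one_apply, hab]

lemma map_snd_one : ((1 : Matrix (Fin n) (Fin n) (DualNumber F)).map TrivSqZeroExt.snd) = 0 := by
  ext a b
  by_cases hab : a = b <;> simp [Matrix.map_apply, Matrix.one_apply, hab]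

lemma eq_uMat_of_fst_eq_one {A : Matrix (Fin n) (Fin n) (DualNumber F)}
    (h : A.map TrivSqZeroExt.fst = 1) : A = uMat (A.map TrivSqZeroExt.snd) := by
  refine Matrix.ext fun a b => ?_
  have hfst : TrivSqZeroExt.fst (A a b) = (1 : Matrix (Fin n) (Fin n) F) a b := by
    rw [← Matrix.map_apply (f := (TrivSqZeroExt.fst : DualNumber F → F)), h]
  have hdecomp : A a b = inl (TrivSqZeroExt.fst (A a b)) + inr (TrivSqZeroExt.snd (A a b)) :=
    (TrivSqZeroExt.inl_fst_add_inr_snd_eq _).symm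
  refine TrivSqZeroExt.ext ?_ ?_
  · rw [hfst]
    by_cases hab : a = b <;>
      simp [uMat, Matrix.map_apply, Matrix.add_apply, Matrix.one_apply, hab]
  · by_cases hab : a = b <;>
      simp [uMat, Matrix.map_apply, Matrix.add_apply, Matrix.one_apply, hab]

lemma conj_uMat {A C : Matrix (Fin n) (Fin n) (DualNumber F)} (hAC : A * C = 1)
    (X : Matrix (Fin n) (Fin n) F) :
    A * uMat X * C = uMat (A.map TrivSqZeroExt.fst * X * C.map TrivSqZeroExt.fst) := by
  have hfst1 : A.map TrivSqZeroExt.fst * C.map TrivSqZeroExt.fst = 1 := by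
    rw [← map_fst_mul, hAC, map_fst_one]
  have hPfst : (A * uMat X * C).map TrivSqZeroExt.fst = 1 := by
    rw [map_fst_mul, map_fst_mul, uMat_map_fst, mul_one, hfst1]
  have hsnd0 : A.map TrivSqZeroExt.fst * C.map TrivSqZeroExt.snd
      + A.map TrivSqZeroExt.snd * C.map TrivSqZeroExt.fst = 0 := by
    rw [← map_snd_mul, hAC, map_snd_one]
  have hPsnd : (A * uMat X * C).map TrivSqZeroExt.snd
      = A.map TrivSqZeroExt.fst * X * C.map TrivSqZeroExt.fst := by
    rw [map_snd_mul, map_snd_mul, map_fst_mul, uMat_map_fst, uMat_map_snd, mul_one]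
    calc A.map TrivSqZeroExt.fst * C.map TrivSqZeroExt.snd
          + (A.map TrivSqZeroExt.fst * X + A.map TrivSqZeroExt.snd * 1)
            * C.map TrivSqZeroExt.fst
        = A.map TrivSqZeroExt.fst * X * C.map TrivSqZeroExt.fst
          + (A.map TrivSqZeroExt.fst * C.map TrivSqZeroExt.snd
            + A.map TrivSqZeroExt.snd * C.map TrivSqZeroExt.fst) := by noncomm_ring
      _ = A.map TrivSqZeroExt.fst * X * C.map TrivSqZeroExt.fst := by rw [hsnd0, add_zero]
  have := eq_uMat_of_fst_eq_one hPfst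
  rw [this, hPsnd]


lemma coe_SLmap (g : SpecialLinearGroup (Fin n) (DualNumber F)) :
    (↑(SpecialLinearGroup.map (n := Fin n) (TrivSqZeroExt.fstHom F F F).toRingHom g)
      : Matrix (Fin n) (Fin n) F)
    = (↑g : Matrix (Fin n) (Fin n) (DualNumber F)).map TrivSqZeroExt.fst := rfl

/-- the additive subgroup of `X` with `1 + ε X ∈ H` -/
def MH (H : Subgroup (SpecialLinearGroup (Fin n) (DualNumber F))) :
    AddSubgroup (Matrix (Fin n) (Fin n) F) where
  carrier := {X | ∃ g ∈ H, (↑g : Matrix (Fin n) (Fin n) (DualNumber F)) = uMat X}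
  zero_mem' := ⟨1, H.one_mem, by rw [uMat_zero]; exact Matrix.SpecialLinearGroup.coe_one⟩
  add_mem' := by
    rintro X Y ⟨g, hg, hgc⟩ ⟨k, hk, hkc⟩
    exact ⟨g * k, H.mul_mem hg hk, by
      rw [Matrix.SpecialLinearGroup.coe_mul, hgc, hkc, uMat_mul]⟩
  neg_mem' := by
    rintro X ⟨g, hg, hgc⟩
    refine ⟨g⁻¹, H.inv_mem hg, ?_⟩
    apply coe_inv_eq
    rw [hgc, uMat_mul, add_neg_cancel, uMat_zero]

lemma MH_trace_zero {H : Subgroup (SpecialLinearGroup (Fin n) (DualNumber F))}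
    {X : Matrix (Fin n) (Fin n) F} (hX : X ∈ MH H) : Matrix.trace X = 0 := by
  obtain ⟨g, _, hgc⟩ := hX
  apply trace_zero_of_uMat_det_one
  rw [← hgc]
  exact g.prop

lemma MH_conj {H : Subgroup (SpecialLinearGroup (Fin n) (DualNumber F))}
    (Hfull : Subgroup.map
      (SpecialLinearGroup.map (n := Fin n) (TrivSqZeroExt.fstHom F F F).toRingHom) H = ⊤) :
    ∀ g0 : SpecialLinearGroup (Fin n) F, ∀ X ∈ MH H,
      (↑g0 : Matrix (Fin n) (Fin n) F) * X * (↑(g0⁻¹) : Matrix (Fin n) (Fin n) F) ∈ MH H := by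
  intro g0 X hX
  obtain ⟨h, hH, hc⟩ := hX
  obtain ⟨l, hlH, hlπ⟩ : ∃ l ∈ H,
      SpecialLinearGroup.map (n := Fin n) (TrivSqZeroExt.fstHom F F F).toRingHom l = g0 := by
    have hmem : g0 ∈ Subgroup.map
        (SpecialLinearGroup.map (n := Fin n) (TrivSqZeroExt.fstHom F F F).toRingHom) H := by
      rw [Hfull]; trivial
    exact Subgroup.mem_map.mp hmem
  refine ⟨l * h * l⁻¹, H.mul_mem (H.mul_mem hlH hH) (H.inv_mem hlH), ?_⟩
  rw [Matrix.SpecialLinearGroup.coe_mul, Matrix.SpecialLinearGroup.coe_mul, hc]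
  have hAC : (↑l : Matrix (Fin n) (Fin n) (DualNumber F))
      * (↑(l⁻¹) : Matrix (Fin n) (Fin n) (DualNumber F)) = 1 := by
    rw [← Matrix.SpecialLinearGroup.coe_mul, mul_inv_cancel, Matrix.SpecialLinearGroup.coe_one]
  have h1 : (↑l : Matrix (Fin n) (Fin n) (DualNumber F)).map TrivSqZeroExt.fst
      = (↑g0 : Matrix (Fin n) (Fin n) F) := by
    rw [← coe_SLmap, hlπ]
  have h2 : (↑(l⁻¹) : Matrix (Fin n) (Fin n) (DualNumber F)).map TrivSqZeroExt.fst
      = (↑(g0⁻¹) : Matrix (Fin n) (Fin n) F) := by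
    rw [← coe_SLmap, map_inv, hlπ]
  rw [conj_uMat hAC X, h1, h2]

end Dual

end Statement19

open Matrix

/-- For `n ≥ 2`, `p ∤ n`, `(n,|F|) ∉ {(2,2), (2,3)}`, a subgroup of
`SL_n(F[ε])` with full image in `SL_n(F)` either meets the kernel of the reduction
`SL_n(F[ε]) → SL_n(F)` trivially, or is all of `SL_n(F[ε])`. -/
theorem statement_19
    (p : ℕ) [Fact p.Prime] (F : Type*) [Field F] [Fintype F] [CharP F p]
    (n : ℕ) (hn : 2 ≤ n) (hpn : ¬ p ∣ n)
    (h22 : ¬(n = 2 ∧ Fintype.card F = 2)) (h23 : ¬(n = 2 ∧ Fintype.card F = 3))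
    (H : Subgroup (SpecialLinearGroup (Fin n) (DualNumber F)))
    (Hfull : Subgroup.map
      (SpecialLinearGroup.map (TrivSqZeroExt.fstHom F F F).toRingHom) H = ⊤) :
    H ⊓ (SpecialLinearGroup.map
        (n := Fin n) (TrivSqZeroExt.fstHom F F F).toRingHom).ker = ⊥ ∨
      H = ⊤ := by
  classical
  by_cases hbot : H ⊓ (SpecialLinearGroup.map
      (n := Fin n) (TrivSqZeroExt.fstHom F F F).toRingHom).ker = ⊥
  · exact Or.inl hbot
  right
  have hne : ∃ X ∈ Statement19.MH H, X ≠ 0 := by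
    rw [Subgroup.eq_bot_iff_forall] at hbot
    push_neg at hbot
    obtain ⟨x, hx, hx1⟩ := hbot
    rw [Subgroup.mem_inf] at hx
    obtain ⟨hxH, hxker⟩ := hx
    have hker : SpecialLinearGroup.map (n := Fin n)
        (TrivSqZeroExt.fstHom F F F).toRingHom x = 1 := MonoidHom.mem_ker.mp hxker
    have hfst : (↑x : Matrix (Fin n) (Fin n) (DualNumber F)).map TrivSqZeroExt.fst = 1 := by
      rw [← Statement19.coe_SLmap, hker, Matrix.SpecialLinearGroup.coe_one]
    have hxu := Statement19.eq_uMat_of_fst_eq_one hfst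
    refine ⟨(↑x : Matrix (Fin n) (Fin n) (DualNumber F)).map TrivSqZeroExt.snd,
      ⟨x, hxH, hxu⟩, ?_⟩
    intro h0
    apply hx1
    have hx1' : (↑x : Matrix (Fin n) (Fin n) (DualNumber F)) = 1 := by
      rw [hxu, h0, Statement19.uMat_zero]
    exact Subtype.ext (by rw [hx1']; rfl)
  have hmain := Statement19.mem_of_trace_zero (Statement19.MH H)
    (Statement19.MH_conj Hfull) p hn hpn
    (fun X hX => Statement19.MH_trace_zero hX) hne
  have hker_le : (SpecialLinearGroup.map
      (n := Fin n) (TrivSqZeroExt.fstHom F F F).toRingHom).ker ≤ H := by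
    intro k hk
    have hker : SpecialLinearGroup.map (n := Fin n)
        (TrivSqZeroExt.fstHom F F F).toRingHom k = 1 := MonoidHom.mem_ker.mp hk
    have hfst : (↑k : Matrix (Fin n) (Fin n) (DualNumber F)).map TrivSqZeroExt.fst = 1 := by
      rw [← Statement19.coe_SLmap, hker, Matrix.SpecialLinearGroup.coe_one]
    have hku := Statement19.eq_uMat_of_fst_eq_one hfst
    have htrk : ((↑k : Matrix (Fin n) (Fin n) (DualNumber F)).map TrivSqZeroExt.snd).trace
        = 0 := by
      apply Statement19.trace_zero_of_uMat_det_one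
      rw [← hku]
      exact k.prop
    obtain ⟨g, hgH, hgc⟩ := hmain _ htrk
    have hgk : g = k := Subtype.ext (by rw [hgc, ← hku])
    rwa [← hgk]
  rw [eq_top_iff]
  intro x _
  obtain ⟨h, hH, hπ⟩ : ∃ h ∈ H,
      SpecialLinearGroup.map (n := Fin n) (TrivSqZeroExt.fstHom F F F).toRingHom h
      = SpecialLinearGroup.map (n := Fin n) (TrivSqZeroExt.fstHom F F F).toRingHom x := by
    have hmem : SpecialLinearGroup.map (n := Fin n) (TrivSqZeroExt.fstHom F F F).toRingHom x
        ∈ Subgroup.map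
          (SpecialLinearGroup.map (n := Fin n) (TrivSqZeroExt.fstHom F F F).toRingHom) H := by
      rw [Hfull]; trivial
    exact Subgroup.mem_map.mp hmem
  have hmem : h⁻¹ * x ∈ (SpecialLinearGroup.map
      (n := Fin n) (TrivSqZeroExt.fstHom F F F).toRingHom).ker := by
    rw [MonoidHom.mem_ker, _root_.map_mul, map_inv, hπ, inv_mul_cancel]
  have hfin := H.mul_mem hH (hker_le hmem)
  simpa using hfin
end
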